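/- arXiv:1506.07703 — 5 statements merged into one kernel-verified Lean document; each statement's English description precedes it below -/
import Mathlib

section
/- In a compact topological space with a basis of compact open sets, if the Cantor–Bendixson process terminates (i.e. some iterated Cantor–Bendixson derivative is empty), then the least ordinal λ for which the λ-th derivative is empty is not a limit ordinal. -/
section CB

variable (T : Type*) [TopologicalSpace T]

/-- The Cantor–Bendixson derivative of a subset `S`: the points of `S` which are not
isolated in `S` (with its subspace topology). -/
def cbDeriv (S : Set T) : Set T :=
  {x ∈ S | ¬ ∃ U : Set T, IsOpen U ∧ x ∈ U ∧ U ∩ S = {x}}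

/-- The transfinite iteration of the Cantor–Bendixson derivative, starting from the
whole space, taking derivatives at successor stages and intersections at limit
stages. -/
noncomputable def cbIter (o : Ordinal) : Set T :=
  Ordinal.limitRecOn (motive := fun _ => Set T) o
    Set.univ
    (fun _ ih => cbDeriv T ih)
    (fun o _ ih => ⋂ (o' : Ordinal) (h : o' < o), ih o' h)

/-- The Cantor–Bendixson rank of a point `x` is the unique ordinal `α` such that `x`
belongs to the `α`-th Cantor–Bendixson derivative but not to the `(α+1)`-st. -/
def CBRankIs (x : T) (α : Ordinal) : Prop :=
  x ∈ cbIter T α ∧ x ∉ cbIter T (α + 1)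


theorem cbDeriv_subset (S : Set T) : cbDeriv T S ⊆ S := fun _ hx => hx.1

theorem isClosed_cbDeriv (S : Set T) (hS : IsClosed S) : IsClosed (cbDeriv T S) := by
  rw [← isOpen_compl_iff, isOpen_iff_forall_mem_open]
  intro x hx
  by_cases hxS : x ∈ S
  · simp only [cbDeriv, Set.mem_compl_iff, Set.mem_setOf_eq, not_and, not_not] at hx
    obtain ⟨U, hU, hxU, hUS⟩ := hx hxS
    refine ⟨U, ?_, hU, hxU⟩
    intro y hy
    simp only [Set.mem_compl_iff, cbDeriv, Set.mem_setOf_eq, not_and, not_not]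
    intro hyS
    have hyx : y = x := by
      have h2 : y ∈ U ∩ S := ⟨hy, hyS⟩
      rw [hUS] at h2; exact h2
    subst hyx
    exact ⟨U, hU, hy, hUS⟩
  · exact ⟨Sᶜ, fun y hy h => hy (cbDeriv_subset T S h), hS.isOpen_compl, hxS⟩

theorem cbIter_zero : cbIter T 0 = Set.univ :=
  Ordinal.limitRecOn_zero _ _ _

theorem cbIter_succ (o : Ordinal) : cbIter T (o + 1) = cbDeriv T (cbIter T o) := by
  rw [cbIter, cbIter, Ordinal.limitRecOn_add_one]

theorem cbIter_limit (o : Ordinal) (h : Order.IsSuccLimit o) :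
    cbIter T o = ⋂ (o' : Ordinal) (_ : o' < o), cbIter T o' :=
  Ordinal.limitRecOn_limit _ _ _ _ h

theorem cbIter_anti : ∀ b a : Ordinal, a ≤ b → cbIter T b ⊆ cbIter T a := by
  intro b
  induction b using Ordinal.limitRecOn with
  | zero => intro a ha; rw [nonpos_iff_eq_zero.mp ha]
  | add_one o ih =>
    intro a ha
    rw [Ordinal.add_one_eq_succ] at ha ⊢
    rcases Order.le_succ_iff_eq_or_le.mp ha with h | h
    · rw [h]
    · rw [← Ordinal.add_one_eq_succ, cbIter_succ]
      exact (cbDeriv_subset T _).trans (ih a h)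
  | limit o ho ih =>
    intro a ha
    rcases eq_or_lt_of_le ha with h | h
    · rw [h]
    · rw [cbIter_limit T o ho]
      exact fun x hx => Set.mem_iInter₂.mp hx a h

theorem isClosed_cbIter (o : Ordinal) : IsClosed (cbIter T o) := by
  induction o using Ordinal.limitRecOn with
  | zero => rw [cbIter_zero]; exact isClosed_univ
  | add_one o ih => rw [cbIter_succ]; exact isClosed_cbDeriv T _ ih
  | limit o ho ih =>
    rw [cbIter_limit T o ho]
    exact isClosed_iInter fun i => isClosed_iInter fun h => ih i h

end CB

/-- In a compact topological space with a basis of compact open sets, if the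
Cantor–Bendixson process terminates (some iterated derivative is empty), then the least
ordinal `λ` for which the `λ`-th derivative is empty is not a limit ordinal. -/
theorem least_empty_cbIter_not_isLimit
    {T : Type*} [TopologicalSpace T] [CompactSpace T]
    (B : Set (Set T)) (hbasis : TopologicalSpace.IsTopologicalBasis B)
    (hcpt : ∀ U ∈ B, IsCompact U)
    (lam : Ordinal) (hempty : cbIter T lam = ∅)
    (hleast : ∀ lam' < lam, cbIter T lam' ≠ ∅) :
    ¬ Order.IsSuccLimit lam := by
  intro hlim
  have hne : (⋂ i : {o : Ordinal // o < lam}, cbIter T i.1).Nonempty := by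
    have : Nonempty {o : Ordinal // o < lam} := ⟨⟨0, hlim.pos⟩⟩
    apply IsCompact.nonempty_iInter_of_directed_nonempty_isCompact_isClosed
    · intro i j
      rcases le_total i.1 j.1 with h | h
      · exact ⟨j, cbIter_anti T j.1 i.1 h, le_refl _⟩
      · exact ⟨i, le_refl _, cbIter_anti T i.1 j.1 h⟩
    · exact fun i => Set.nonempty_iff_ne_empty.mpr (hleast i.1 i.2)
    · exact fun i => (isClosed_cbIter T i.1).isCompact
    · exact fun i => isClosed_cbIter T i.1
  rw [cbIter_limit T lam hlim] at hempty
  obtain ⟨x, hx⟩ := hne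
  have : x ∈ ⋂ (o' : Ordinal) (_ : o' < lam), cbIter T o' :=
    Set.mem_iInter₂.mpr fun o' h => Set.mem_iInter.mp hx ⟨o', h⟩
  rw [hempty] at this
  exact this
end

section
/- Over a domestic string algebra, if two bands b and b' have the same first letter then b = b'. -/
/-!
Combinatorics of strings and bands over a string algebra, presented abstractly:
a string algebra `KQ/I` is recorded by its quiver (vertices, arrows with source and
target) together with the relation `comp b a`, meaning that the length-two path
"`a` followed by `b`" does not lie in the monomial ideal `I`.  The defining conditions
of a string algebra are recorded as fields.
-/

/-- Combinatorial data of a string algebra. -/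
structure StringData where
  /-- vertices -/
  V : Type
  /-- arrows -/
  A : Type
  /-- source of an arrow -/
  s : A → V
  /-- target of an arrow -/
  t : A → V
  /-- `comp b a` : the composite path "`a` then `b`" avoids the monomial relations -/
  comp : A → A → Prop
  comp_st : ∀ a b : A, comp b a → s b = t a
  /-- every vertex has at most two incoming arrows -/
  two_in : ∀ (v : V) (a b c : A), t a = v → t b = v → t c = v → a = b ∨ a = c ∨ b = c
  /-- every vertex has at most two outgoing arrows -/
  two_out : ∀ (v : V) (a b c : A), s a = v → s b = v → s c = v → a = b ∨ a = c ∨ b = c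
  /-- for every arrow there is at most one arrow that may follow it -/
  uniq_left : ∀ a b b' : A, comp b a → comp b' a → b = b'
  /-- for every arrow there is at most one arrow that it may follow -/
  uniq_right : ∀ a g g' : A, comp a g → comp a g' → g = g'

namespace StringData

variable (D : StringData)

/-- A letter is a direct arrow (`Sum.inl`) or an inverse arrow (`Sum.inr`). -/
abbrev Letter := D.A ⊕ D.A

/-- `Adj l l'` : the letter `l` may be immediately followed (to the right, reading a
string from left to right) by the letter `l'`, avoiding relations and immediate
backtracks. -/
def Adj : D.Letter → D.Letter → Prop
  | Sum.inl a, Sum.inl a' => D.comp a a'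
  | Sum.inl a, Sum.inr b => a ≠ b ∧ D.s a = D.s b
  | Sum.inr b, Sum.inl a => b ≠ a ∧ D.t b = D.t a
  | Sum.inr b, Sum.inr b' => D.comp b' b

/-- A string: a nonempty reduced walk avoiding the relations. -/
def IsString (w : List D.Letter) : Prop :=
  w ≠ [] ∧ w.Chain' D.Adj

/-- The `k`-th power of a word. -/
def wpow {X : Type*} (w : List X) (k : ℕ) : List X :=
  (List.replicate k w).flatten

/-- The formal inverse of a letter. -/
def linv : D.Letter → D.Letter := Sum.elim Sum.inr Sum.inl

/-- The formal inverse of a word. -/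
def winv (w : List D.Letter) : List D.Letter := (w.map D.linv).reverse

/-- `IsRotation u v` : `v` is a cyclic permutation (rotation) of `u`. -/
def IsRotation {X : Type*} (u v : List X) : Prop :=
  ∃ p q : List X, u = p ++ q ∧ v = q ++ p

/-- A band: a string of the form `α ⋯ β⁻¹` (starting with a direct letter and ending
with an inverse letter), which closes up cyclically (so that all of its rotations are
strings) and which is primitive, i.e. not a proper power. -/
def IsBand (w : List D.Letter) : Prop :=
  D.IsString w ∧
  (∃ (a : D.A) (x : List D.Letter) (b : D.A), w = Sum.inl a :: (x ++ [Sum.inr b])) ∧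
  (∃ l l' : D.Letter, w.getLast? = some l ∧ w.head? = some l' ∧ D.Adj l l') ∧
  (∀ (v : List D.Letter) (k : ℕ), w = wpow v k → k = 1)

/-- A string algebra is domestic when it has only finitely many bands. -/
def Domestic : Prop := {w : List D.Letter | D.IsBand w}.Finite

end StringData


namespace BandAux
open StringData

variable {X : Type*}

theorem wpow_zero (w : List X) : wpow w 0 = [] := rfl

theorem wpow_succ (w : List X) (k : ℕ) : wpow w (k + 1) = w ++ wpow w k := by
  simp [wpow, List.replicate_succ]

theorem wpow_one (w : List X) : wpow w 1 = w := by simp [wpow_succ, wpow_zero]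

theorem length_wpow (w : List X) (k : ℕ) : (wpow w k).length = k * w.length := by
  induction k with
  | zero => simp [wpow_zero]
  | succ k ih => rw [wpow_succ, List.length_append, ih, Nat.succ_mul, Nat.add_comm]

theorem wpow_add (w : List X) (a b : ℕ) : wpow w (a + b) = wpow w a ++ wpow w b := by
  induction a with
  | zero => simp [wpow_zero]
  | succ a ih => rw [Nat.succ_add, wpow_succ, wpow_succ, ih, List.append_assoc]

theorem wpow_mul (w : List X) (m e : ℕ) : wpow (wpow w e) m = wpow w (m * e) := by
  induction m with
  | zero => simp [wpow_zero]
  | succ m ih => rw [wpow_succ, ih, Nat.succ_mul, Nat.add_comm, wpow_add]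

theorem getD_wpow (w : List X) (k n : ℕ) (d : X) (h : n < k * w.length) :
    (wpow w k).getD n d = w.getD (n % w.length) d := by
  induction k generalizing n with
  | zero => omega
  | succ k ih =>
    rw [wpow_succ]
    rcases lt_or_ge n w.length with h1 | h1
    · rw [List.getD_append _ _ _ _ h1, Nat.mod_eq_of_lt h1]
    · rw [List.getD_append_right _ _ _ _ h1, ih _ (by rw [Nat.succ_mul] at h; omega)]
      congr 1
      conv_rhs => rw [show n = n - w.length + 1 * w.length by omega]
      rw [Nat.add_mul_mod_self_right]

theorem period_ext {f : ℕ → X} {N p : ℕ}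
    (Hp : ∀ n, n + p < N → f (n + p) = f n) :
    ∀ t n, n + t * p < N → f (n + t * p) = f n := by
  intro t
  induction t with
  | zero => simp
  | succ t ih =>
    intro n h
    have h' : n + (t + 1) * p = (n + t * p) + p := by ring
    have h1 : (n + t * p) + p < N := by omega
    rw [h', Hp _ h1]
    exact ih n (by omega)

theorem period_step {f : ℕ → X} {N p : ℕ} (hp : 0 < p)
    (Hp : ∀ n, n + p < N → f (n + p) = f n) :
    ∀ n m, n < N → m < N → n % p = m % p → f n = f m := by
  have key : ∀ n m, n ≤ m → m < N → n % p = m % p → f m = f n := by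
    intro n m hnm hm hmod
    obtain ⟨t, ht⟩ := (Nat.modEq_iff_dvd' hnm).1 hmod
    have hm2 : m = n + t * p := by
      rw [Nat.mul_comm] at ht; omega
    rw [hm2]
    exact period_ext Hp t n (by omega)
  intro n m hn hm hmod
  rcases le_total n m with h | h
  · exact (key n m h hm hmod).symm
  · exact key m n h hn hmod.symm

theorem fw : ∀ (s : ℕ) {f : ℕ → X} (p q N : ℕ), p + q ≤ s → 0 < p → 0 < q → p + q ≤ N →
    (∀ n, n + p < N → f (n + p) = f n) → (∀ n, n + q < N → f (n + q) = f n) →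
    ∀ n m, n < N → m < N → n % Nat.gcd p q = m % Nat.gcd p q → f n = f m := by
  intro s
  induction s with
  | zero => intro f p q N hs hp hq; omega
  | succ s ih =>
    intro f p q N hs hp hq hN Hp Hq
    rcases Nat.lt_trichotomy p q with h | h | h
    · -- p < q
      have hgcd : Nat.gcd p (q - p) = Nat.gcd p q := Nat.gcd_sub_self_right (le_of_lt h)
      have Hq' : ∀ n, n + (q - p) < N - p → f (n + (q - p)) = f n := by
        intro n hn
        have h3 : f ((n + (q - p)) + p) = f (n + (q - p)) := Hp _ (by omega)
        rw [show (n + (q - p)) + p = n + q by omega] at h3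
        rw [← h3, Hq n (by omega)]
      have Hp' : ∀ n, n + p < N - p → f (n + p) = f n := fun n hn => Hp n (by omega)
      have IH := ih p (q - p) (N - p) (by omega) hp (by omega) (by omega) Hp' Hq'
      intro n m hn hm hmod
      obtain ⟨c, hc⟩ : Nat.gcd p q ∣ p := Nat.gcd_dvd_left p q
      have red : ∀ j, j < N → ∃ j', j' < N - p ∧ f j = f j' ∧
          j' % Nat.gcd p q = j % Nat.gcd p q := by
        intro j hj
        rcases lt_or_ge j (N - p) with h1 | h1
        · exact ⟨j, h1, rfl, rfl⟩
        · have hjp : p ≤ j := by omega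
          refine ⟨j - p, by omega, ?_, ?_⟩
          · have h2 := Hp (j - p) (by omega)
            rw [show j - p + p = j by omega] at h2
            exact h2
          · conv_rhs => rw [show j = j - p + Nat.gcd p q * c from by rw [← hc]; omega]
            rw [Nat.add_mul_mod_self_left]
      obtain ⟨n', hn', hfn, hmodn⟩ := red n hn
      obtain ⟨m', hm', hfm, hmodm⟩ := red m hm
      rw [hfn, hfm]
      exact IH n' m' hn' hm' (by rw [hgcd, hmodn, hmodm, hmod])
    · subst h
      rw [Nat.gcd_self]
      exact period_step hp Hp
    · -- q < p
      have hgcd : Nat.gcd q (p - q) = Nat.gcd p q := by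
        rw [Nat.gcd_sub_self_right (le_of_lt h), Nat.gcd_comm]
      have Hp' : ∀ n, n + (p - q) < N - q → f (n + (p - q)) = f n := by
        intro n hn
        have h3 : f ((n + (p - q)) + q) = f (n + (p - q)) := Hq _ (by omega)
        rw [show (n + (p - q)) + q = n + p by omega] at h3
        rw [← h3, Hp n (by omega)]
      have Hq' : ∀ n, n + q < N - q → f (n + q) = f n := fun n hn => Hq n (by omega)
      have IH := ih q (p - q) (N - q) (by omega) hq (by omega) (by omega) Hq' Hp'
      intro n m hn hm hmod
      obtain ⟨c, hc⟩ : Nat.gcd p q ∣ q := Nat.gcd_dvd_right p q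
      have red : ∀ j, j < N → ∃ j', j' < N - q ∧ f j = f j' ∧
          j' % Nat.gcd p q = j % Nat.gcd p q := by
        intro j hj
        rcases lt_or_ge j (N - q) with h1 | h1
        · exact ⟨j, h1, rfl, rfl⟩
        · have hjq : q ≤ j := by omega
          refine ⟨j - q, by omega, ?_, ?_⟩
          · have h2 := Hq (j - q) (by omega)
            rw [show j - q + q = j by omega] at h2
            exact h2
          · conv_rhs => rw [show j = j - q + Nat.gcd p q * c from by rw [← hc]; omega]
            rw [Nat.add_mul_mod_self_left]
      obtain ⟨n', hn', hfn, hmodn⟩ := red n hn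
      obtain ⟨m', hm', hfm, hmodm⟩ := red m hm
      rw [hfn, hfm]
      exact IH n' m' hn' hm' (by rw [hgcd, hmodn, hmodm, hmod])

end BandAux

/-- Over a domestic string algebra, if two bands `b` and `b'` have the same first letter
then `b = b'`. -/
theorem band_eq_of_head_eq (D : StringData) (hdom : D.Domestic)
    (b b' : List D.Letter) (hb : D.IsBand b) (hb' : D.IsBand b')
    (hhead : b.head? = b'.head?) : b = b' := by
  classical
  by_contra hne
  obtain ⟨⟨hbne, hbch⟩, ⟨a, x, β, hbsh⟩, ⟨l, l', hlst, hhd, hadj⟩, hbprim⟩ := hb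
  obtain ⟨⟨hbne', hbch'⟩, ⟨a', x', β', hbsh'⟩, ⟨m1, m2, hlst', hhd', hadj'⟩, hbprim'⟩ := hb'
  have hp : 0 < b.length := List.length_pos_iff.2 hbne
  have hq : 0 < b'.length := List.length_pos_iff.2 hbne'
  have hbhd : b.head? = some (Sum.inl a) := by rw [hbsh]; rfl
  have hbhd' : b'.head? = some (Sum.inl a') := by rw [hbsh']; rfl
  have hinl : (Sum.inl a : D.Letter) = Sum.inl a' := by
    rw [hbhd, hbhd'] at hhead
    injection hhead
  have last_app : ∀ u : List D.Letter, (u ++ b).getLast? = some (Sum.inr β) := by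
    intro u
    rw [hbsh, show u ++ (Sum.inl a :: (x ++ [Sum.inr β]))
      = (u ++ (Sum.inl a :: x)) ++ [Sum.inr β] by simp]
    exact List.getLast?_concat
  have last_app' : ∀ u : List D.Letter, (u ++ b').getLast? = some (Sum.inr β') := by
    intro u
    rw [hbsh', show u ++ (Sum.inl a' :: (x' ++ [Sum.inr β']))
      = (u ++ (Sum.inl a' :: x')) ++ [Sum.inr β'] by simp]
    exact List.getLast?_concat
  have hblst : b.getLast? = some (Sum.inr β) := by
    have := last_app []
    rwa [List.nil_append] at this
  have hblst' : b'.getLast? = some (Sum.inr β') := by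
    have := last_app' []
    rwa [List.nil_append] at this
  have hADJ : D.Adj (Sum.inr β) (Sum.inl a) := by
    rw [hblst] at hlst
    rw [hbhd] at hhd
    injection hlst with hlst
    injection hhd with hhd
    rw [hlst, hhd]
    exact hadj
  have hADJ' : D.Adj (Sum.inr β') (Sum.inl a') := by
    rw [hblst'] at hlst'
    rw [hbhd'] at hhd'
    injection hlst' with hlst'
    injection hhd' with hhd'
    rw [hlst', hhd']
    exact hadj'
  have hd_wpow : ∀ n, (StringData.wpow b (n + 1)).head? = some (Sum.inl a) := by
    intro n
    rw [BandAux.wpow_succ, hbsh]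
    rfl
  have last_wpow : ∀ n, (StringData.wpow b (n + 1)).getLast? = some (Sum.inr β) := by
    intro n
    rw [show n + 1 = n + 1 from rfl, BandAux.wpow_add b n 1, BandAux.wpow_one]
    exact last_app _
  have chain_wpow : ∀ n, List.Chain' D.Adj (StringData.wpow b n) := by
    intro n
    induction n with
    | zero => simp [BandAux.wpow_zero]; exact List.isChain_nil
    | succ n ih =>
      rw [BandAux.wpow_succ]
      refine hbch.append ih ?_
      intro u hu v hv
      rw [Option.mem_def, hblst] at hu
      injection hu with hu
      cases n with
      | zero => simp [BandAux.wpow_zero] at hv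
      | succ n =>
        rw [Option.mem_def, hd_wpow n] at hv
        injection hv with hv
        rw [← hu, ← hv]
        exact hADJ
  have chain_W : ∀ n, List.Chain' D.Adj (StringData.wpow b (n + 1) ++ b') := by
    intro n
    refine (chain_wpow (n + 1)).append hbch' ?_
    intro u hu v hv
    rw [Option.mem_def, last_wpow] at hu
    injection hu with hu
    rw [Option.mem_def, hbhd'] at hv
    injection hv with hv
    rw [← hu, ← hv, ← hinl]
    exact hADJ
  set K := b'.length + 2 with hKdef
  have hWlen : ∀ k : ℕ, (StringData.wpow b (k + K) ++ b').length
      = (k + K) * b.length + b'.length := by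
    intro k
    rw [List.length_append, BandAux.length_wpow]
  have hWband : ∀ k, D.IsBand (StringData.wpow b (k + K) ++ b') := by
    intro k
    have hk1 : k + K = (k + K - 1) + 1 := by omega
    refine ⟨⟨?_, ?_⟩,
      ⟨a, x ++ [Sum.inr β] ++ StringData.wpow b (k + K - 1) ++ (Sum.inl a' :: x'), β', ?_⟩,
      ⟨Sum.inr β', Sum.inl a, ?_, ?_, ?_⟩, ?_⟩
    · intro hWnil
      exact hbne' (List.append_eq_nil_iff.mp hWnil).2
    · show List.Chain' D.Adj (StringData.wpow b (k + K) ++ b')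
      rw [hk1]
      exact chain_W _
    · show StringData.wpow b (k + K) ++ b'
        = Sum.inl a :: ((x ++ [Sum.inr β] ++ StringData.wpow b (k + K - 1)
            ++ (Sum.inl a' :: x')) ++ [Sum.inr β'])
      rw [hk1, BandAux.wpow_succ, hbsh, hbsh']
      simp
    · show (StringData.wpow b (k + K) ++ b').getLast? = some (Sum.inr β')
      exact last_app' _
    · show (StringData.wpow b (k + K) ++ b').head? = some (Sum.inl a)
      rw [hk1, BandAux.wpow_succ, hbsh]
      rfl
    · show D.Adj (Sum.inr β') (Sum.inl a)
      rw [hinl]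
      exact hADJ'
    · -- primitivity
      intro v mm hvm
      by_contra hmm1
      have hlen1 : (k + K) * b.length + b'.length = mm * v.length := by
        rw [← BandAux.length_wpow v mm, ← hvm, List.length_append, BandAux.length_wpow]
      have hP : 0 < v.length := by
        rcases Nat.eq_zero_or_pos v.length with h0 | h0
        · rw [h0, Nat.mul_zero] at hlen1; omega
        · exact h0
      have hmm2 : 2 ≤ mm := by
        rcases Nat.lt_or_ge mm 2 with h2 | h2
        · interval_cases mm
          · rw [Nat.zero_mul] at hlen1; omega
          · exact absurd rfl hmm1
        · exact h2
      have h2P : 2 * v.length ≤ (k + K) * b.length + b'.length := by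
        rw [hlen1]
        exact Nat.mul_le_mul_right v.length hmm2
      have hqp : b'.length ≤ b'.length * b.length := Nat.le_mul_of_pos_right _ hp
      have hKp : b'.length * b.length + 2 * b.length ≤ (k + K) * b.length := by
        have h3 : (b'.length + 2) * b.length ≤ (k + K) * b.length :=
          Nat.mul_le_mul_right b.length (by omega)
        calc b'.length * b.length + 2 * b.length = (b'.length + 2) * b.length := by ring
          _ ≤ (k + K) * b.length := h3
      have hpP : b.length + v.length ≤ (k + K) * b.length := by omega
      set f : ℕ → D.Letter := fun n => (StringData.wpow b (k + K) ++ b').getD n (Sum.inl a)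
        with hfdef
      have fb : ∀ n, n < (k + K) * b.length → f n = b.getD (n % b.length) (Sum.inl a) := by
        intro n hn
        rw [hfdef]
        simp only []
        rw [List.getD_append _ _ _ _ (by rw [BandAux.length_wpow]; exact hn)]
        exact BandAux.getD_wpow b _ n _ hn
      have fv : ∀ n, n < (k + K) * b.length + b'.length →
          f n = v.getD (n % v.length) (Sum.inl a) := by
        intro n hn
        rw [hfdef]
        simp only []
        rw [hvm]
        exact BandAux.getD_wpow v mm n _ (by omega)
      have Hp : ∀ n, n + b.length < (k + K) * b.length → f (n + b.length) = f n := by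
        intro n h
        rw [fb _ (by omega), fb _ (by omega), Nat.add_mod_right]
      have HP : ∀ n, n + v.length < (k + K) * b.length → f (n + v.length) = f n := by
        intro n h
        rw [fv _ (by omega), fv _ (by omega), Nat.add_mod_right]
      have hres := BandAux.fw (b.length + v.length) b.length v.length ((k + K) * b.length)
        le_rfl hp hP hpP Hp HP
      have hg0p : Nat.gcd b.length v.length ∣ b.length := Nat.gcd_dvd_left _ _
      have hg0P : Nat.gcd b.length v.length ∣ v.length := Nat.gcd_dvd_right _ _
      have hg00 : 0 < Nat.gcd b.length v.length := Nat.gcd_pos_of_pos_left _ hp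
      have hg0le : Nat.gcd b.length v.length ≤ b.length := Nat.le_of_dvd hp hg0p
      have htake : (b.take (Nat.gcd b.length v.length)).length = Nat.gcd b.length v.length := by
        rw [List.length_take]
        exact min_eq_left hg0le
      have b_eq : b = StringData.wpow (b.take (Nat.gcd b.length v.length))
          (b.length / Nat.gcd b.length v.length) := by
        apply List.ext_getElem
        · rw [BandAux.length_wpow, htake, Nat.div_mul_cancel hg0p]
        · intro n h1 h2
          rw [← List.getD_eq_getElem b (Sum.inl a) h1, ← List.getD_eq_getElem _ (Sum.inl a) h2]
          have hmodlt : n % Nat.gcd b.length v.length < Nat.gcd b.length v.length :=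
            Nat.mod_lt _ hg00
          calc b.getD n (Sum.inl a) = f n := by
                have h3 := fb n (by omega)
                rw [Nat.mod_eq_of_lt h1] at h3
                exact h3.symm
            _ = f (n % Nat.gcd b.length v.length) :=
                hres n _ (by omega) (by omega)
                  (Nat.mod_mod_of_dvd n (dvd_refl _)).symm
            _ = b.getD (n % Nat.gcd b.length v.length) (Sum.inl a) := by
                have h3 := fb (n % Nat.gcd b.length v.length) (by omega)
                rw [show n % Nat.gcd b.length v.length % b.length
                  = n % Nat.gcd b.length v.length from Nat.mod_eq_of_lt (by omega)] at h3
                exact h3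
            _ = (b.take (Nat.gcd b.length v.length)).getD
                  (n % Nat.gcd b.length v.length) (Sum.inl a) := by
                rw [List.getD_eq_getElem _ _ (by omega : n % Nat.gcd b.length v.length < b.length),
                  List.getD_eq_getElem _ _ (by rw [htake]; exact hmodlt)]
                exact List.getElem_take.symm
            _ = (StringData.wpow (b.take (Nat.gcd b.length v.length))
                  (b.length / Nat.gcd b.length v.length)).getD n (Sum.inl a) := by
                rw [BandAux.getD_wpow _ _ _ _
                  (by rw [htake, Nat.div_mul_cancel hg0p]; exact h1), htake]
      have hdiv := hbprim _ _ b_eq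
      have hpg : b.length = Nat.gcd b.length v.length := by
        have h3 := Nat.div_mul_cancel hg0p
        rw [hdiv, one_mul] at h3
        exact h3.symm
      have hppP : b.length ∣ v.length := hpg ▸ hg0P
      have v_eq : v = StringData.wpow b (v.length / b.length) := by
        apply List.ext_getElem
        · rw [BandAux.length_wpow, Nat.div_mul_cancel hppP]
        · intro n h1 h2
          rw [← List.getD_eq_getElem v (Sum.inl a) h1, ← List.getD_eq_getElem _ (Sum.inl a) h2]
          calc v.getD n (Sum.inl a) = f n := by
                have h3 := fv n (by omega)
                rw [Nat.mod_eq_of_lt h1] at h3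
                exact h3.symm
            _ = b.getD (n % b.length) (Sum.inl a) := fb n (by omega)
            _ = (StringData.wpow b (v.length / b.length)).getD n (Sum.inl a) :=
                (BandAux.getD_wpow b _ n _ (by rw [Nat.div_mul_cancel hppP]; exact h1)).symm
      have hfinal : StringData.wpow b (k + K) ++ b'
          = StringData.wpow b (mm * (v.length / b.length)) := by
        rw [hvm]
        conv_lhs => rw [v_eq]
        rw [BandAux.wpow_mul]
      have hlen2 : (k + K) * b.length + b'.length = (mm * (v.length / b.length)) * b.length := by
        rw [← BandAux.length_wpow b (mm * (v.length / b.length)), ← hfinal,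
          List.length_append, BandAux.length_wpow]
      have hke : k + K < mm * (v.length / b.length) := by
        by_contra hle
        push_neg at hle
        have h3 := Nat.mul_le_mul_right b.length hle
        omega
      have hsplit : StringData.wpow b (k + K)
          ++ StringData.wpow b (mm * (v.length / b.length) - (k + K))
          = StringData.wpow b (k + K) ++ b' := by
        rw [← BandAux.wpow_add,
          show k + K + (mm * (v.length / b.length) - (k + K)) = mm * (v.length / b.length)
            by omega, hfinal]
      have hb'eq : b' = StringData.wpow b (mm * (v.length / b.length) - (k + K)) :=
        (List.append_cancel_left hsplit).symm
      have hone := hbprim' _ _ hb'eq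
      rw [hone, BandAux.wpow_one] at hb'eq
      exact hne hb'eq.symm
  have hinj : Function.Injective
      (fun k : ℕ => StringData.wpow b (k + K) ++ b') := by
    intro k1 k2 hW
    simp only [] at hW
    have h1 := congrArg List.length hW
    rw [hWlen, hWlen] at h1
    have h2 : (k1 + K) * b.length = (k2 + K) * b.length := by omega
    have h3 := Nat.eq_of_mul_eq_mul_right hp h2
    omega
  have hfin : ({w : List D.Letter | D.IsBand w}).Finite := hdom
  exact absurd (Set.infinite_of_injective_forall_mem hinj hWband) hfin.not_infinite
end

section
/- Let R be a domestic string algebra, let b = α⋯β^{-1} be a band and let c = d⋯e be a cyclic permutation of a band not equivalent to b. Then b cannot overlap c in any string: there is no string of the form u = α x d y β^{-1} z e with b = α x d y β^{-1} and c = d y β^{-1} z e. -/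
/-! ### Auxiliary combinatorics of words -/

namespace BandOverlapAux

open StringData List

variable {X : Type*}

theorem wpow_zero (w : List X) : wpow w 0 = [] := rfl

theorem wpow_succ (w : List X) (k : ℕ) : wpow w (k+1) = w ++ wpow w k := by
  simp [wpow, List.replicate_succ]

theorem wpow_one (w : List X) : wpow w 1 = w := by simp [wpow]

theorem wpow_add (w : List X) (a b : ℕ) : wpow w (a+b) = wpow w a ++ wpow w b := by
  induction a with
  | zero => simp [wpow_zero]
  | succ n ih => rw [Nat.succ_add, wpow_succ, wpow_succ, ih, List.append_assoc]

theorem wpow_succ' (w : List X) (k : ℕ) : wpow w (k+1) = wpow w k ++ w := by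
  rw [wpow_add, wpow_one]

theorem length_wpow (w : List X) (k : ℕ) : (wpow w k).length = k * w.length := by
  induction k with
  | zero => simp [wpow_zero]
  | succ n ih => rw [wpow_succ, List.length_append, ih, Nat.succ_mul]; ring

theorem wpow_nil (k : ℕ) : wpow ([] : List X) k = [] := by
  simp [wpow]

theorem wpow_mul (w : List X) (a b : ℕ) : wpow (wpow w a) b = wpow w (a*b) := by
  induction b with
  | zero => simp [wpow_zero]
  | succ n ih => rw [wpow_succ, ih, Nat.mul_succ, Nat.add_comm, wpow_add]

theorem swapw (x y : List X) (m : ℕ) : wpow (x ++ y) m ++ x = x ++ wpow (y ++ x) m := by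
  induction m with
  | zero => simp [wpow_zero]
  | succ n ih => rw [wpow_succ, wpow_succ (y ++ x)]
                 simp only [List.append_assoc] at ih ⊢
                 rw [ih]

theorem prefix_wpow (w : List X) {k k' : ℕ} (h : k ≤ k') : wpow w k <+: wpow w k' := by
  obtain ⟨d, rfl⟩ := Nat.exists_eq_add_of_le h
  rw [wpow_add]; exact List.prefix_append _ _

theorem self_prefix_wpow (w : List X) {k : ℕ} (hk : 1 ≤ k) : w <+: wpow w k := by
  have := prefix_wpow w hk
  rwa [wpow_one] at this

theorem head?_wpow (w : List X) {k : ℕ} (hk : 1 ≤ k) : (wpow w k).head? = w.head? := by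
  obtain ⟨d, rfl⟩ := Nat.exists_eq_add_of_le hk
  rw [Nat.add_comm, wpow_succ]
  cases w with
  | nil => rw [wpow_nil]; rfl
  | cons a t => rfl

theorem getLast?_append_right (l l' : List X) (h : l' ≠ []) :
    (l ++ l').getLast? = l'.getLast? := by
  rw [List.getLast?_append]
  have : l'.getLast?.isSome := by rwa [List.getLast?_isSome]
  obtain ⟨a, ha⟩ := Option.isSome_iff_exists.mp this
  rw [ha]; rfl

theorem head?_append_left (l l' : List X) (h : l ≠ []) : (l ++ l').head? = l.head? := by
  cases l with
  | nil => exact absurd rfl h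
  | cons a t => rfl

theorem getLast?_wpow (w : List X) {k : ℕ} (hk : 1 ≤ k) : (wpow w k).getLast? = w.getLast? := by
  obtain ⟨d, rfl⟩ := Nat.exists_eq_add_of_le hk
  rw [Nat.add_comm, wpow_succ']
  rcases eq_or_ne w [] with rfl | hw
  · rw [wpow_nil]; rfl
  · exact getLast?_append_right _ _ hw

theorem wpow_ne_nil (w : List X) (hw : w ≠ []) {k : ℕ} (hk : 1 ≤ k) : wpow w k ≠ [] := by
  intro h
  have := congrArg List.length h
  rw [length_wpow] at this
  simp at this
  rcases this with h1 | h2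
  · omega
  · exact hw h2

theorem wpow_base_eq (u w : List X) {i : ℕ} (hi : 1 ≤ i) (hlen : u.length = w.length)
    (h : wpow u i = wpow w i) : u = w := by
  obtain ⟨d, rfl⟩ := Nat.exists_eq_add_of_le hi
  rw [Nat.add_comm, wpow_succ, wpow_succ] at h
  exact (List.append_inj h hlen).1

/-- commuting words have a common root -/
theorem comm_common_root : ∀ n (x y : List X), x.length + y.length = n →
    x ++ y = y ++ x → ∃ z α β, x = wpow z α ∧ y = wpow z β := by
  intro n
  induction n using Nat.strong_induction_on with
  | _ n ih =>
    intro x y hn hxy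
    rcases eq_or_ne x [] with rfl | hx
    · exact ⟨y, 0, 1, (wpow_zero y).symm, (wpow_one y).symm⟩
    rcases eq_or_ne y [] with rfl | hy
    · exact ⟨x, 1, 0, (wpow_one x).symm, (wpow_zero x).symm⟩
    rcases le_or_gt x.length y.length with hle | hlt
    · have hpre : x <+: y := by
        refine List.prefix_of_prefix_length_le ?_ (List.prefix_append y x) hle
        rw [← hxy]; exact List.prefix_append x y
      obtain ⟨t, rfl⟩ := hpre
      have ht : x ++ t = t ++ x := by
        apply List.append_cancel_left (as := x)
        simpa [List.append_assoc] using hxy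
      have hlt' : x.length + t.length < n := by
        subst hn; simp [List.length_append]
        have : 0 < x.length := List.length_pos_iff.mpr hx
        omega
      obtain ⟨z, α, β, hxz, htz⟩ := ih _ hlt' x t rfl ht
      exact ⟨z, α, α + β, hxz, by rw [wpow_add, ← hxz, ← htz]⟩
    · have hpre : y <+: x := by
        refine List.prefix_of_prefix_length_le ?_ (List.prefix_append x y) (le_of_lt hlt)
        rw [hxy]; exact List.prefix_append y x
      obtain ⟨t, rfl⟩ := hpre
      have ht : y ++ t = t ++ y := by
        apply List.append_cancel_left (as := y)
        have : (y ++ t) ++ y = y ++ (y ++ t) := hxy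
        simpa [List.append_assoc] using this.symm
      have hlt' : y.length + t.length < n := by
        subst hn; simp [List.length_append]
        have : 0 < y.length := List.length_pos_iff.mpr hy
        omega
      obtain ⟨z, α, β, hyz, htz⟩ := ih _ hlt' y t rfl ht
      exact ⟨z, α + β, α, by rw [wpow_add, ← hyz, ← htz], hyz⟩

theorem prim_unique_aux (x y : List X) (hx : x ≠ []) (hy : y ≠ [])
    (px : ∀ t m, x = wpow t m → m = 1) (py : ∀ t m, y = wpow t m → m = 1)
    {i j : ℕ} (hi : 1 ≤ i) (hj : 1 ≤ j) (h : wpow x j = wpow y i)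
    (hle : x.length ≤ y.length) : x = y := by
  have h1 : x <+: wpow y i := h ▸ self_prefix_wpow x hj
  have hpre : x <+: y := List.prefix_of_prefix_length_le h1 (self_prefix_wpow y hi) hle
  obtain ⟨t, rfl⟩ := hpre
  have h2 : wpow x j = wpow (t ++ x) i := by
    apply List.append_cancel_left (as := x)
    calc x ++ wpow x j = wpow x (j+1) := (wpow_succ x j).symm
      _ = wpow x j ++ x := wpow_succ' x j
      _ = wpow (x ++ t) i ++ x := by rw [h]
      _ = x ++ wpow (t ++ x) i := swapw x t i
  have h3 : wpow (x ++ t) i = wpow (t ++ x) i := by rw [← h, h2]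
  have hbase : x ++ t = t ++ x := wpow_base_eq _ _ hi (by simp [List.length_append]; omega) h3
  obtain ⟨z, α, β, hxz, htz⟩ := comm_common_root (x.length + t.length) x t rfl hbase
  have hα : α = 1 := px z α hxz
  subst hα
  rw [wpow_one] at hxz
  subst hxz
  have : x ++ t = wpow x (1 + β) := by rw [wpow_add, wpow_one, htz]
  have hβ : 1 + β = 1 := py x (1+β) this
  have : β = 0 := by omega
  subst this
  rw [wpow_zero] at htz
  rw [htz, List.append_nil]

theorem prim_unique (x y : List X) (hx : x ≠ []) (hy : y ≠ [])
    (px : ∀ t m, x = wpow t m → m = 1) (py : ∀ t m, y = wpow t m → m = 1)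
    {i j : ℕ} (hi : 1 ≤ i) (hj : 1 ≤ j) (h : wpow x j = wpow y i) : x = y := by
  rcases le_total x.length y.length with hle | hle
  · exact prim_unique_aux x y hx hy px py hi hj h hle
  · exact (prim_unique_aux y x hy hx py px hj hi h.symm hle).symm

/-- primitive root existence -/
theorem exists_prim : ∀ n (w : List X), w.length = n → w ≠ [] →
    ∃ v k, 1 ≤ k ∧ w = wpow v k ∧ ∀ t m, v = wpow t m → m = 1 := by
  intro n
  induction n using Nat.strong_induction_on with
  | _ n ih =>
    intro w hn hw
    by_cases hp : ∀ t m, w = wpow t m → m = 1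
    · exact ⟨w, 1, le_refl 1, (wpow_one w).symm, hp⟩
    · push_neg at hp
      obtain ⟨t, m, hwt, hm⟩ := hp
      have ht : t ≠ [] := by
        rintro rfl; rw [wpow_nil] at hwt; exact hw hwt
      have hm2 : 2 ≤ m := by
        rcases Nat.lt_or_ge m 2 with h' | h'
        · interval_cases m
          · rw [wpow_zero] at hwt; exact absurd hwt hw
          · exact absurd rfl hm
        · exact h'
      have htlen : t.length < n := by
        have := congrArg List.length hwt
        rw [length_wpow] at this
        have h0 : 0 < t.length := List.length_pos_iff.mpr ht
        have h2 : 2 * t.length ≤ m * t.length := Nat.mul_le_mul_right _ hm2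
        omega
      obtain ⟨v, k, hk, htv, hv⟩ := ih _ htlen t rfl ht
      refine ⟨v, k * m, ?_, ?_, hv⟩
      · exact Nat.one_le_iff_ne_zero.mpr (by positivity)
      · rw [hwt, htv, wpow_mul]

/-- rotation of a power is a power of a rotation -/
theorem rot_pow : ∀ n (t : List X) (m : ℕ) (p q : List X), p.length = n → t ≠ [] →
    wpow t m = p ++ q → ∃ t1 t2, t = t1 ++ t2 ∧ q ++ p = wpow (t2 ++ t1) m := by
  intro n
  induction n using Nat.strong_induction_on with
  | _ n ih =>
    intro t m p q hn ht h
    rcases Nat.lt_or_ge p.length t.length with hlt | hge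
    · rcases Nat.eq_zero_or_pos m with rfl | hm
      · rw [wpow_zero] at h
        obtain ⟨rfl, rfl⟩ := List.append_eq_nil_iff.mp h.symm
        exact ⟨[], t, rfl, by simp [wpow_zero]⟩
      · have hpre : p <+: t := by
          refine List.prefix_of_prefix_length_le ?_ (self_prefix_wpow t hm) (le_of_lt hlt)
          rw [h]; exact List.prefix_append _ _
        obtain ⟨t2, rfl⟩ := hpre
        refine ⟨p, t2, rfl, ?_⟩
        apply List.append_cancel_left (as := p)
        rw [← swapw, h, List.append_assoc]
    · have hm : 1 ≤ m := by
        rcases Nat.eq_zero_or_pos m with rfl | hm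
        · rw [wpow_zero] at h
          obtain ⟨rfl, rfl⟩ := List.append_eq_nil_iff.mp h.symm
          simp at hge
          exact absurd hge ht
        · exact hm
      have hpre : t <+: p := by
        refine List.prefix_of_prefix_length_le (self_prefix_wpow t hm) ?_ hge
        rw [h]; exact List.prefix_append _ _
      obtain ⟨p', rfl⟩ := hpre
      have hrec : wpow t m = p' ++ (q ++ t) := by
        obtain ⟨d, rfl⟩ := Nat.exists_eq_add_of_le hm
        rw [Nat.add_comm, wpow_succ] at h
        have h' : wpow t d = p' ++ q := by
          apply List.append_cancel_left (as := t)
          rw [h, List.append_assoc]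
        rw [Nat.add_comm, wpow_succ', h', List.append_assoc]
      have hlen : p'.length < n := by
        subst hn
        have : 0 < t.length := List.length_pos_iff.mpr ht
        simp [List.length_append]
        omega
      obtain ⟨t1, t2, ht12, heq⟩ := ih _ hlen t m p' (q ++ t) rfl ht hrec
      exact ⟨t1, t2, ht12, by rw [← List.append_assoc]; exact heq⟩

theorem isRotation_symm {u v : List X} (h : IsRotation u v) : IsRotation v u := by
  obtain ⟨p, q, h1, h2⟩ := h; exact ⟨q, p, h2, h1⟩

theorem isRotation_trans {u v w : List X} (h1 : IsRotation u v) (h2 : IsRotation v w) :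
    IsRotation u w := by
  obtain ⟨p, q, hu, hv⟩ := h1
  obtain ⟨p', q', hv', hw⟩ := h2
  rcases le_or_gt p'.length q.length with hle | hlt
  · have hpre : p' <+: q := by
      have ha : p' <+: v := by rw [hv']; exact List.prefix_append _ _
      have hb : q <+: v := by rw [hv]; exact List.prefix_append _ _
      exact List.prefix_of_prefix_length_le ha hb hle
    obtain ⟨r, rfl⟩ := hpre
    have hq' : q' = r ++ p := by
      apply List.append_cancel_left (as := p')
      rw [← hv', hv, List.append_assoc]
    exact ⟨p ++ p', r, by rw [hu, List.append_assoc], by rw [hw, hq', List.append_assoc]⟩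
  · have hpre : q <+: p' := by
      have ha : q <+: v := by rw [hv]; exact List.prefix_append _ _
      have hb : p' <+: v := by rw [hv']; exact List.prefix_append _ _
      exact List.prefix_of_prefix_length_le ha hb (le_of_lt hlt)
    obtain ⟨r, rfl⟩ := hpre
    have hp : p = r ++ q' := by
      apply List.append_cancel_left (as := q)
      have : q ++ p = (q ++ r) ++ q' := by rw [← hv, hv']
      rw [this, List.append_assoc]
    exact ⟨r, q' ++ q, by rw [hu, hp, List.append_assoc], by rw [hw, List.append_assoc]⟩

/-- a rotation of a primitive word is primitive -/
theorem prim_rot {x y : List X} (hx : x ≠ []) (px : ∀ t m, x = wpow t m → m = 1)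
    (h : IsRotation x y) : ∀ t m, y = wpow t m → m = 1 := by
  intro t m hym
  obtain ⟨p, q, hyp, hxq⟩ := isRotation_symm h
  have ht : t ≠ [] := by
    rintro rfl
    rw [wpow_nil] at hym
    rw [hym] at hyp
    obtain ⟨rfl, rfl⟩ := List.append_eq_nil_iff.mp hyp.symm
    exact hx (by simpa using hxq)
  obtain ⟨t1, t2, _, heq⟩ := rot_pow p.length t m p q rfl ht (by rw [← hym, hyp])
  exact px (t2 ++ t1) m (by rw [hxq, heq])

/-- a rotation of a cyclically-closing chain is a cyclically-closing chain -/
theorem cyc_rot (R : X → X → Prop) (p q : List X) (hc : List.Chain' R (p ++ q))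
    (hcl : ∀ x ∈ (p ++ q).getLast?, ∀ y ∈ (p ++ q).head?, R x y) :
    List.Chain' R (q ++ p) ∧ (∀ x ∈ (q ++ p).getLast?, ∀ y ∈ (q ++ p).head?, R x y) := by
  rcases eq_or_ne p [] with rfl | hp
  · simpa using ⟨hc, hcl⟩
  rcases eq_or_ne q [] with rfl | hq
  · simpa using ⟨by simpa using hc, by simpa using hcl⟩
  obtain ⟨hcp, hcq, hseam⟩ := List.isChain_append.mp hc
  have hl : (p ++ q).getLast? = q.getLast? := getLast?_append_right _ _ hq
  have hh : (p ++ q).head? = p.head? := head?_append_left _ _ hp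
  rw [hl, hh] at hcl
  constructor
  · exact List.IsChain.append hcq hcp hcl
  · rw [getLast?_append_right _ _ hp, head?_append_left _ _ hq]
    exact hseam

/-- chain of a power of a cyclically closing chain -/
theorem chain'_wpow (R : X → X → Prop) (w : List X) (hc : List.Chain' R w)
    (hcl : ∀ x ∈ w.getLast?, ∀ y ∈ w.head?, R x y) : ∀ k, List.Chain' R (wpow w k) := by
  intro k
  induction k with
  | zero => rw [wpow_zero]; exact List.isChain_nil
  | succ d ih =>
    rw [wpow_succ]
    refine List.IsChain.append hc ih ?_
    intro x hx y hy
    rcases Nat.eq_zero_or_pos d with rfl | hd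
    · rw [wpow_zero] at hy; simp at hy
    · rw [head?_wpow w hd] at hy
      exact hcl x hx y hy

theorem shape_lemma {A B : Type*} (w : List (A ⊕ B)) (a : A) (bb : B)
    (hh : w.head? = some (Sum.inl a)) (hl : w.getLast? = some (Sum.inr bb)) :
    ∃ mid, w = Sum.inl a :: (mid ++ [Sum.inr bb]) := by
  obtain ⟨l', rfl⟩ := List.getLast?_eq_some_iff.mp hl
  cases l' with
  | nil => simp at hh
  | cons x xs =>
    have hx : x = Sum.inl a := by
      have : (x :: (xs ++ [Sum.inr bb])).head? = some (Sum.inl a) := by simpa using hh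
      simpa using this
    subst hx
    exact ⟨xs, by simp⟩

theorem head?_prefix {l₁ l₂ : List X} (h : l₁ <+: l₂) (hne : l₁ ≠ []) :
    l₂.head? = l₁.head? := by
  obtain ⟨r, rfl⟩ := h
  exact head?_append_left _ _ hne

end BandOverlapAux

open StringData BandOverlapAux in
/-- Let `R` be a domestic string algebra, `b` a band and `c` a cyclic permutation of a
band `b₂` which is not equivalent to `b` (i.e. not a cyclic permutation of `b` or of
`b⁻¹`).  Then `b` cannot overlap `c` in any string: there is no string of the form
`u = b ++ q = p ++ c` in which the occurrences of `b` (as a prefix) and of `c` (as a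
suffix) overlap. -/
theorem band_not_overlap_other_band (D : StringData) (hdom : D.Domestic)
    (b b₂ c : List D.Letter) (hb : D.IsBand b) (hb₂ : D.IsBand b₂)
    (hc : IsRotation b₂ c)
    (hne : ¬ (IsRotation b b₂ ∨ IsRotation (D.winv b) b₂)) :
    ¬ ∃ p q : List D.Letter, p ≠ [] ∧ q ≠ [] ∧ p.length < b.length ∧
        b ++ q = p ++ c ∧ D.IsString (b ++ q) := by
  classical
  rintro ⟨p, q, hp, hq, hlen, heq, _hstr⟩
  obtain ⟨⟨hbne, hbch⟩, ⟨a, xb, β, hbshape⟩, ⟨l, l', hbl, hbh, hbadj⟩, hbprim⟩ := hb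
  -- head and last letters of `b`
  have hbshape' : b = (Sum.inl a :: xb) ++ [Sum.inr β] := by rw [hbshape]; rfl
  have hbhead : b.head? = some (Sum.inl a) := by rw [hbshape]; rfl
  have hblast : b.getLast? = some (Sum.inr β) := by
    rw [hbshape']; exact List.getLast?_concat
  have hadjba : D.Adj (Sum.inr β) (Sum.inl a) := by
    have h1 : l = Sum.inr β := Option.some.inj (hbl.symm.trans hblast)
    have h2 : l' = Sum.inl a := Option.some.inj (hbh.symm.trans hbhead)
    rwa [h1, h2] at hbadj
  -- the overlap `o` : `b = p ++ o`, `c = o ++ q`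
  have hppre : p <+: b := by
    have h1 : p <+: b ++ q := by rw [heq]; exact List.prefix_append _ _
    exact List.prefix_of_prefix_length_le h1 (List.prefix_append _ _) (le_of_lt hlen)
  obtain ⟨o, hbo⟩ := hppre
  have ho : o ≠ [] := by
    rintro rfl
    rw [List.append_nil] at hbo
    rw [← hbo] at hlen
    exact lt_irrefl _ hlen
  have hco : c = o ++ q := by
    apply List.append_cancel_left (as := p)
    rw [← List.append_assoc, hbo, ← heq]
  have hcne : c ≠ [] := by
    rw [hco]; intro h; exact ho (List.append_eq_nil_iff.mp h).1
  -- chain components of b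
  have hchpo : List.Chain' D.Adj (p ++ o) := by rw [hbo]; exact hbch
  obtain ⟨hchp, hcho, hA1⟩ := List.isChain_append.mp hchpo
  -- b₂ and c are cyclically closing chains
  obtain ⟨⟨hb2ne, hb2ch⟩, ⟨a2, xb2, β2, hb2shape⟩, ⟨l2, l2', hb2l, hb2h, hb2adj⟩, hb2prim⟩ := hb₂
  have hb2cl : ∀ x ∈ b₂.getLast?, ∀ y ∈ b₂.head?, D.Adj x y := by
    intro x hx y hy
    rw [hb2l] at hx; rw [hb2h] at hy
    simp only [Option.mem_def, Option.some.injEq] at hx hy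
    rw [hx] at hb2adj
    rw [hy] at hb2adj
    exact hb2adj
  obtain ⟨p₂, q₂, hb2eq, hceq⟩ := hc
  have hcc := cyc_rot D.Adj p₂ q₂ (by rw [← hb2eq]; exact hb2ch) (by rw [← hb2eq]; exact hb2cl)
  rw [← hceq] at hcc
  obtain ⟨hchc, hccl⟩ := hcc
  -- decomposed closure facts for c
  have hclast : c.getLast? = q.getLast? := by rw [hco]; exact getLast?_append_right _ _ hq
  have hchead : c.head? = o.head? := by rw [hco]; exact head?_append_left _ _ ho
  have hA3 : ∀ x ∈ q.getLast?, ∀ y ∈ o.head?, D.Adj x y := by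
    intro x hx y hy
    exact hccl x (by rw [hclast]; exact hx) y (by rw [hchead]; exact hy)
  -- the cyclic strings U n = p ++ c^(n+1) ++ o
  set U : ℕ → List D.Letter := fun n => p ++ (wpow c (n+1) ++ o) with hU
  have hUchain : ∀ n, List.Chain' D.Adj (U n) := by
    intro n
    refine List.IsChain.append hchp
      (List.IsChain.append (chain'_wpow _ c hchc hccl (n+1)) hcho ?_) ?_
    · intro x hx y hy
      rw [getLast?_wpow c (Nat.succ_le_succ (Nat.zero_le n)), hclast] at hx
      exact hA3 x hx y hy
    · intro x hx y hy
      rw [head?_append_left _ _ (wpow_ne_nil c hcne (Nat.succ_le_succ (Nat.zero_le n))),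
        head?_wpow c (Nat.succ_le_succ (Nat.zero_le n)), hchead] at hy
      exact hA1 x hx y hy
  have hbheadp : b.head? = p.head? := by rw [← hbo]; exact head?_append_left _ _ hp
  have hblasto : b.getLast? = o.getLast? := by rw [← hbo]; exact getLast?_append_right _ _ ho
  have hUhead : ∀ n, (U n).head? = some (Sum.inl a) := by
    intro n
    show (p ++ _).head? = _
    rw [head?_append_left _ _ hp, ← hbheadp, hbhead]
  have hUlast : ∀ n, (U n).getLast? = some (Sum.inr β) := by
    intro n
    show (p ++ (wpow c (n+1) ++ o)).getLast? = _
    rw [getLast?_append_right _ _ (fun h => ho (List.append_eq_nil_iff.mp h).2),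
      getLast?_append_right _ _ ho, ← hblasto, hblast]
  have hUne : ∀ n, U n ≠ [] := by
    intro n h
    have := hUhead n
    rw [h] at this
    simp at this
  -- primitive roots of the U n
  have hVK : ∀ n, ∃ v k, 1 ≤ k ∧ U n = wpow v k ∧ (∀ t m, v = wpow t m → m = 1) :=
    fun n => exists_prim (U n).length (U n) rfl (hUne n)
  choose v k hk hUeq hvprim using hVK
  have hvne : ∀ n, v n ≠ [] := by
    intro n h
    apply hUne n
    rw [hUeq n, h, wpow_nil]
  have hvpre : ∀ n, v n <+: U n := fun n => by
    rw [hUeq n]; exact self_prefix_wpow _ (hk n)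
  have hvhead : ∀ n, (v n).head? = some (Sum.inl a) := fun n => by
    rw [← head?_prefix (hvpre n) (hvne n), hUhead n]
  have hvlast : ∀ n, (v n).getLast? = some (Sum.inr β) := fun n => by
    have h1 : (U n).getLast? = (v n).getLast? := by
      rw [hUeq n]; exact getLast?_wpow _ (hk n)
    rw [← h1, hUlast n]
  -- each v n is a band
  have hvband : ∀ n, D.IsBand (v n) := by
    intro n
    refine ⟨⟨hvne n, (hUchain n).prefix (hvpre n)⟩, ?_, ?_, hvprim n⟩
    · obtain ⟨mid, hmid⟩ := shape_lemma (v n) a β (hvhead n) (hvlast n)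
      exact ⟨a, mid, β, hmid⟩
    · exact ⟨Sum.inr β, Sum.inl a, hvlast n, hvhead n, hadjba⟩
  -- pigeonhole : some band is the root of infinitely many U n
  haveI : Finite ↥{w : List D.Letter | D.IsBand w} := hdom.to_subtype
  obtain ⟨y, hy⟩ :=
    Finite.exists_infinite_fiber (fun n => (⟨v n, hvband n⟩ : ↥{w : List D.Letter | D.IsBand w}))
  have hS : ((fun n => (⟨v n, hvband n⟩ : ↥{w : List D.Letter | D.IsBand w})) ⁻¹' {y}).Infinite :=
    Set.infinite_coe_iff.mp hy
  obtain ⟨n, hn⟩ := hS.nonempty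
  obtain ⟨n', hn', hnn'⟩ := hS.exists_gt n
  have hvv : v n = v n' := by
    have h1 : (⟨v n, hvband n⟩ : ↥{w : List D.Letter | D.IsBand w}) = y := hn
    have h2 : (⟨v n', hvband n'⟩ : ↥{w : List D.Letter | D.IsBand w}) = y := hn'
    exact congrArg Subtype.val (h1.trans h2.symm)
  -- length/exponent comparison
  have hclpos : 0 < c.length := List.length_pos_iff.mpr hcne
  have hvlpos : 0 < (v n).length := List.length_pos_iff.mpr (hvne n)
  have hUlen : ∀ m, (U m).length = p.length + ((m+1) * c.length + o.length) := by
    intro m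
    show (p ++ (wpow c (m+1) ++ o)).length = _
    rw [List.length_append, List.length_append, length_wpow]
  have hUlt : (U n).length < (U n').length := by
    rw [hUlen n, hUlen n']
    have : (n+1) * c.length < (n'+1) * c.length :=
      Nat.mul_lt_mul_of_lt_of_le (by omega) (le_refl _) hclpos
    omega
  have hkk : k n < k n' := by
    have h1 : k n * (v n).length < k n' * (v n).length := by
      rw [← length_wpow, ← length_wpow, ← hUeq n]
      rw [hvv, ← hUeq n']
      exact hUlt
    exact Nat.lt_of_mul_lt_mul_right h1
  set i := n' - n with hidef
  set j := k n' - k n with hjdef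
  have hi1 : 1 ≤ i := by omega
  have hj1 : 1 ≤ j := by omega
  -- the fundamental relation : o ++ (v n)^j = c^i ++ o
  have hUn' : U n' = U n ++ wpow (v n) j := by
    rw [hUeq n', ← hvv, hUeq n, ← wpow_add]
    congr 1
    omega
  have hUn'2 : U n' = (p ++ wpow c (n+1)) ++ (wpow c i ++ o) := by
    show p ++ (wpow c (n'+1) ++ o) = _
    have hsplit : n' + 1 = (n+1) + i := by omega
    rw [hsplit, wpow_add]
    simp [List.append_assoc]
  have hmain : o ++ wpow (v n) j = wpow c i ++ o := by
    apply List.append_cancel_left (as := p ++ wpow c (n+1))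
    have h1 : (p ++ wpow c (n+1)) ++ (o ++ wpow (v n) j) = U n ++ wpow (v n) j := by
      show _ = (p ++ (wpow c (n+1) ++ o)) ++ _
      simp [List.append_assoc]
    rw [h1, ← hUn', hUn'2]
  have hmain2 : wpow (v n) j = wpow (q ++ o) i := by
    apply List.append_cancel_left (as := o)
    rw [hmain, hco]
    exact swapw o q i
  -- q ++ o is primitive (rotation of the band b₂)
  have hrot_c_c' : IsRotation c (q ++ o) := ⟨o, q, hco, rfl⟩
  have hrot_b2_c' : IsRotation b₂ (q ++ o) := isRotation_trans ⟨p₂, q₂, hb2eq, hceq⟩ hrot_c_c'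
  have hb2ne' : b₂ ≠ [] := by rw [hb2shape]; simp
  have hc'prim : ∀ t m, (q ++ o) = wpow t m → m = 1 := prim_rot hb2ne' hb2prim hrot_b2_c'
  have hc'ne : q ++ o ≠ [] := fun h => hq (List.append_eq_nil_iff.mp h).1
  -- hence v n = q ++ o
  have hveq : v n = q ++ o :=
    prim_unique (v n) (q ++ o) (hvne n) hc'ne (hvprim n) hc'prim hi1 hj1 hmain2
  -- U n = b ++ (q ++ o)^(n+1)
  have hUn2 : U n = b ++ wpow (q ++ o) (n+1) := by
    show p ++ (wpow c (n+1) ++ o) = _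
    rw [← hbo, List.append_assoc]
    congr 1
    rw [hco]
    exact swapw o q (n+1)
  -- so b is a power of q ++ o, hence equals it by primitivity
  have hc'pos : 0 < (q ++ o).length := List.length_pos_iff.mpr hc'ne
  have hUlen1 : (U n).length = k n * (q ++ o).length := by
    rw [hUeq n, hveq, length_wpow]
  have hUlen2 : (U n).length = b.length + (n+1) * (q ++ o).length := by
    rw [hUn2, List.length_append, length_wpow]
  have hkn1 : n + 1 ≤ k n := by
    have hle : (n+1) * (q ++ o).length ≤ k n * (q ++ o).length := by
      rw [← hUlen1, hUlen2]
      exact Nat.le_add_left _ _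
    exact Nat.le_of_mul_le_mul_right hle hc'pos
  have hbpow : b = wpow (q ++ o) (k n - (n+1)) := by
    apply List.append_cancel_right (bs := wpow (q ++ o) (n+1))
    rw [← hUn2, hUeq n, hveq, ← wpow_add]
    congr 1
    omega
  have hm1 : k n - (n+1) = 1 := hbprim _ _ hbpow
  have hbfinal : b = q ++ o := by rw [hbpow, hm1, wpow_one]
  -- b is then a rotation of b₂, contradiction
  have hrot_b_c : IsRotation b c := ⟨q, o, hbfinal, hco⟩
  have : IsRotation b b₂ :=
    isRotation_trans hrot_b_c (isRotation_symm ⟨p₂, q₂, hb2eq, hceq⟩)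
  exact hne (Or.inl this)
end

section
/- Over a domestic string algebra, a band b cannot overlap two shifted copies of itself in a string: there is no string of the form u = b' b'' b''' where b = b' b'' = b'' b''' with b'', b' nonempty proper (i.e. two copies of b overlapping in a strictly longer string). -/
/-! ### Auxiliary word combinatorics -/

namespace StringData

open List

variable {X : Type*}

theorem wpow_zero (w : List X) : wpow w 0 = [] := rfl

theorem wpow_succ (w : List X) (k : ℕ) : wpow w (k + 1) = w ++ wpow w k := by
  simp [wpow, List.replicate_succ]

theorem wpow_one (w : List X) : wpow w 1 = w := by
  simp [wpow_succ, wpow_zero]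

theorem wpow_add (w : List X) (a b : ℕ) : wpow w (a + b) = wpow w a ++ wpow w b := by
  induction a with
  | zero => simp [wpow_zero]
  | succ n ih => rw [Nat.succ_add, wpow_succ, wpow_succ, ih, List.append_assoc]

theorem length_wpow (w : List X) (k : ℕ) : (wpow w k).length = k * w.length := by
  induction k with
  | zero => simp [wpow_zero]
  | succ n ih => rw [wpow_succ, List.length_append, ih]; ring

theorem wpow_mul (w : List X) (a b : ℕ) : wpow (wpow w a) b = wpow w (a * b) := by
  induction b with
  | zero => simp [wpow_zero]
  | succ n ih =>
    rw [wpow_succ, ih, show a * (n + 1) = a + a * n by ring, wpow_add]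

theorem wpow_ne_nil {w : List X} (hw : w ≠ []) {k : ℕ} (hk : 1 ≤ k) :
    wpow w k ≠ [] := by
  intro h
  have h1 := congrArg List.length h
  rw [length_wpow, List.length_nil] at h1
  rcases Nat.mul_eq_zero.mp h1 with h' | h'
  · omega
  · exact hw (List.eq_nil_of_length_eq_zero h')

theorem eq_nil_of_wpow_eq_nil {w : List X} {k : ℕ} (hk : 1 ≤ k) (h : wpow w k = []) :
    w = [] := by
  by_contra hw
  exact wpow_ne_nil hw hk h

theorem wpow_getElem? (w : List X) (k i : ℕ) (h : i < k * w.length) :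
    (wpow w k)[i]? = w[i % w.length]? := by
  have hw : w ≠ [] := by
    intro hnil; rw [hnil] at h; simp at h
  have hl : 0 < w.length := List.length_pos_iff.mpr hw
  induction k generalizing i with
  | zero => omega
  | succ n ih =>
    rw [wpow_succ]
    by_cases hi : i < w.length
    · rw [List.getElem?_append_left hi, Nat.mod_eq_of_lt hi]
    · push_neg at hi
      rw [List.getElem?_append_right hi, ih (i - w.length)
        (by have hexp : (n + 1) * w.length = n * w.length + w.length := by ring
            omega),
        ← Nat.mod_eq_sub_mod hi]

/-- `Per w d` : the word `w` has period `d`. -/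
def Per (w : List X) (d : ℕ) : Prop :=
  ∀ i, i + d < w.length → w[i]? = w[i + d]?

theorem per_wpow (w : List X) (k : ℕ) : Per (wpow w k) w.length := by
  intro i hi
  rw [length_wpow] at hi
  rw [wpow_getElem? w k i (by omega), wpow_getElem? w k (i + w.length) hi,
    Nat.add_mod_right]

theorem per_getElem?_mod (w : List X) (d : ℕ) (hd : 0 < d) (hp : Per w d) :
    ∀ i, i < w.length → w[i]? = w[i % d]? := by
  intro i
  induction i using Nat.strong_induction_on with
  | _ i ih =>
    intro hi
    by_cases h : i < d
    · rw [Nat.mod_eq_of_lt h]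
    · push_neg at h
      have h1 : (i - d) + d < w.length := by omega
      have h2 := hp (i - d) h1
      rw [show (i - d) + d = i by omega] at h2
      rw [← h2, ih (i - d) (by omega) (by omega), Nat.mod_eq_sub_mod h]

theorem per_sub (w : List X) (a b : ℕ) (_ha : 0 < a) (hab : a ≤ b)
    (hw : a + b ≤ w.length) (pa : Per w a) (pb : Per w b) : Per w (b - a) := by
  intro i hi
  by_cases h : i + b < w.length
  · have e1 := pb i h
    have e2 := pa (i + b - a) (by omega)
    rw [show (i + b - a) + a = i + b by omega] at e2
    rw [e1, ← e2, show i + (b - a) = i + b - a by omega]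
  · have hia : a ≤ i := by omega
    have e1 := pa (i - a) (by omega)
    rw [show (i - a) + a = i by omega] at e1
    have e2 := pb (i - a) (by omega)
    rw [← e1, e2, show (i - a) + b = i + (b - a) by omega]

theorem per_gcd : ∀ (N a b : ℕ) (w : List X), a + b ≤ N → Per w a → Per w b →
    a + b ≤ w.length → Per w (Nat.gcd a b) := by
  intro N
  induction N with
  | zero =>
    intro a b w h pa pb hw
    have h1 : a = 0 ∧ b = 0 := by omega
    rw [h1.1, h1.2]
    intro i hi
    simp
  | succ N ih =>
    intro a b w h pa pb hw
    rcases Nat.eq_zero_or_pos a with rfl | hA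
    · rwa [Nat.gcd_zero_left]
    rcases Nat.eq_zero_or_pos b with rfl | hB
    · rwa [Nat.gcd_zero_right]
    rcases le_total a b with hab | hab
    · have pba := per_sub w a b hA hab hw pa pb
      have hres := ih a (b - a) w (by omega) pa pba (by omega)
      have hgcd : Nat.gcd a (b - a) = Nat.gcd a b := by
        conv_rhs => rw [show b = (b - a) + a by omega]
        rw [Nat.gcd_add_self_right]
      rwa [hgcd] at hres
    · have pba := per_sub w b a hB hab (by omega) pb pa
      have hres := ih b (a - b) w (by omega) pb pba (by omega)
      have hgcd : Nat.gcd b (a - b) = Nat.gcd a b := by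
        rw [Nat.gcd_comm a b]
        conv_rhs => rw [show a = (a - b) + b by omega]
        rw [Nat.gcd_add_self_right]
      rwa [hgcd] at hres

theorem take_eq_wpow_take (w : List X) (d : ℕ) (hd : 0 < d) (hp : Per w d)
    (t : ℕ) (ht : d * t ≤ w.length) : w.take (d * t) = wpow (w.take d) t := by
  rcases Nat.eq_zero_or_pos t with rfl | hT
  · simp [wpow_zero]
  have hdl : d ≤ w.length := le_trans (Nat.le_mul_of_pos_right d hT) ht
  have hlen : (w.take d).length = d := by
    rw [List.length_take]; omega
  apply List.ext_getElem?
  intro n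
  by_cases hn : n < d * t
  · rw [List.getElem?_take_of_lt hn, wpow_getElem? _ t n
      (by rw [hlen, Nat.mul_comm t d]; omega), hlen,
      List.getElem?_take_of_lt (Nat.mod_lt n hd),
      per_getElem?_mod w d hd hp n (by omega)]
  · push_neg at hn
    rw [List.getElem?_eq_none, List.getElem?_eq_none]
    · rw [length_wpow, hlen, Nat.mul_comm t d]; omega
    · rw [List.length_take]; omega

theorem pow_eq_pow_common (p r : List X) (hp : p ≠ []) (hr : r ≠ [])
    (i j : ℕ) (hi : 1 ≤ i) (hj : 1 ≤ j) (h : wpow p i = wpow r j) :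
    ∃ s α β, p = wpow s α ∧ r = wpow s β := by
  have lp : 0 < p.length := List.length_pos_iff.mpr hp
  have lr : 0 < r.length := List.length_pos_iff.mpr hr
  have hlen : i * p.length = j * r.length := by
    have h1 := congrArg List.length h
    rwa [length_wpow, length_wpow] at h1
  set W := wpow p (2 * i) with hW
  have hW2 : W = wpow r (2 * j) := by
    rw [hW, show 2 * i = i + i by ring, wpow_add, h, ← wpow_add,
      show j + j = 2 * j by ring]
  have hWlen : W.length = 2 * (i * p.length) := by
    rw [hW, length_wpow]; ring
  have hge : p.length + r.length ≤ W.length := by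
    have h1 : p.length ≤ i * p.length := Nat.le_mul_of_pos_left _ hi
    have h2 : r.length ≤ j * r.length := Nat.le_mul_of_pos_left _ hj
    omega
  have pa : Per W p.length := by rw [hW]; exact per_wpow p (2 * i)
  have pb : Per W r.length := by rw [hW2]; exact per_wpow r (2 * j)
  have pg := per_gcd (p.length + r.length) p.length r.length W le_rfl pa pb hge
  set g := Nat.gcd p.length r.length with hg
  have hgpos : 0 < g := Nat.gcd_pos_of_pos_left _ lp
  have hdp : g ∣ p.length := Nat.gcd_dvd_left _ _
  have hdr : g ∣ r.length := Nat.gcd_dvd_right _ _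
  have hptake : W.take p.length = p := by
    have hdecomp : W = p ++ wpow p (2 * i - 1) := by
      rw [hW]
      conv_lhs => rw [show 2 * i = 1 + (2 * i - 1) by omega]
      rw [wpow_add, wpow_one]
    rw [hdecomp, List.take_left]
  have hrtake : W.take r.length = r := by
    have hdecomp : W = r ++ wpow r (2 * j - 1) := by
      rw [hW2]
      conv_lhs => rw [show 2 * j = 1 + (2 * j - 1) by omega]
      rw [wpow_add, wpow_one]
    rw [hdecomp, List.take_left]
  refine ⟨W.take g, p.length / g, r.length / g, ?_, ?_⟩
  · have h1 := take_eq_wpow_take W g hgpos pg (p.length / g)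
      (by rw [Nat.mul_div_cancel' hdp]; omega)
    rw [Nat.mul_div_cancel' hdp, hptake] at h1
    exact h1
  · have h1 := take_eq_wpow_take W g hgpos pg (r.length / g)
      (by rw [Nat.mul_div_cancel' hdr]; omega)
    rw [Nat.mul_div_cancel' hdr, hrtake] at h1
    exact h1

/-- A word is primitive when it is not a proper power. -/
def Primitive (w : List X) : Prop := ∀ (v : List X) (k : ℕ), w = wpow v k → k = 1

theorem exists_primitive_root_aux :
    ∀ (n : ℕ) (w : List X), w.length ≤ n → w ≠ [] →
      ∃ r j, w = wpow r j ∧ 1 ≤ j ∧ Primitive r := by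
  intro n
  induction n with
  | zero =>
    intro w h hw
    exact absurd (List.eq_nil_of_length_eq_zero (by omega)) hw
  | succ n ih =>
    intro w h hw
    by_cases hprim : Primitive w
    · exact ⟨w, 1, (wpow_one w).symm, le_rfl, hprim⟩
    · rw [Primitive] at hprim
      push_neg at hprim
      obtain ⟨v, k, hvk, hk⟩ := hprim
      have hk0 : 1 ≤ k := by
        rcases Nat.eq_zero_or_pos k with rfl | h'
        · exact absurd hvk (by rw [wpow_zero]; exact hw)
        · exact h'
      have hk2 : 2 ≤ k := by omega
      have hv : v ≠ [] := by
        intro hnil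
        apply hw
        rw [hvk, hnil]
        apply List.eq_nil_of_length_eq_zero
        rw [length_wpow]
        simp
      have hlv : 0 < v.length := List.length_pos_iff.mpr hv
      have hlw : w.length = k * v.length := by rw [hvk, length_wpow]
      have hvlt : v.length < w.length := by
        have : 2 * v.length ≤ k * v.length := Nat.mul_le_mul_right _ hk2
        omega
      obtain ⟨r, j, h1, h2, h3⟩ := ih v (by omega) hv
      exact ⟨r, j * k, by rw [hvk, h1, wpow_mul], Nat.one_le_iff_ne_zero.mpr
        (by positivity), h3⟩

theorem exists_primitive_root (w : List X) (hw : w ≠ []) :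
    ∃ r j, w = wpow r j ∧ 1 ≤ j ∧ Primitive r :=
  exists_primitive_root_aux w.length w le_rfl hw

theorem head?_wpow (w : List X) (hw : w ≠ []) (k : ℕ) (hk : 1 ≤ k) :
    (wpow w k).head? = w.head? := by
  obtain ⟨k, rfl⟩ : ∃ m, k = m + 1 := ⟨k - 1, by omega⟩
  rw [wpow_succ, List.head?_append_of_ne_nil _ hw]

theorem getLast?_wpow (w : List X) (hw : w ≠ []) (k : ℕ) (hk : 1 ≤ k) :
    (wpow w k).getLast? = w.getLast? := by
  obtain ⟨k, rfl⟩ : ∃ m, k = m + 1 := ⟨k - 1, by omega⟩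
  rw [show k + 1 = k + 1 from rfl, wpow_add, wpow_one,
    List.getLast?_append_of_ne_nil _ hw]

theorem shape_of_head_last {w : List X} {h l : X} (hw : 2 ≤ w.length)
    (hh : w.head? = some h) (hl : w.getLast? = some l) :
    ∃ x, w = h :: (x ++ [l]) := by
  cases w with
  | nil => simp at hh
  | cons a t =>
    have ha : a = h := by simpa using hh
    have ht : t ≠ [] := by
      intro hnil; rw [hnil] at hw; simp at hw
    have hlast : t.getLast ht = l := by
      have h1 : (a :: t).getLast? = some ((a :: t).getLast (by simp)) :=
        List.getLast?_eq_getLast _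
      rw [hl] at h1
      have h2 : (a :: t).getLast (by simp) = t.getLast ht :=
        List.getLast_cons ht
      rw [h2] at h1
      exact (Option.some_injective _ h1).symm
    refine ⟨t.dropLast, ?_⟩
    rw [ha]
    congr 1
    rw [← hlast]
    exact (List.dropLast_append_getLast ht).symm

variable {D : StringData}

theorem chain'_wpow {w : List D.Letter} (hc : w.Chain' D.Adj)
    (hcl : ∀ x ∈ w.getLast?, ∀ y ∈ w.head?, D.Adj x y) (k : ℕ) :
    (wpow w k).Chain' D.Adj := by
  induction k with
  | zero => simp [wpow_zero]; exact List.isChain_nil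
  | succ n ih =>
    rw [wpow_succ]; change List.IsChain _ _; rw [List.isChain_append]
    refine ⟨hc, ih, ?_⟩
    intro x hx y hy
    apply hcl x hx y
    rcases Nat.eq_zero_or_pos n with rfl | hn
    · rw [wpow_zero] at hy; simp at hy
    · have hw : w ≠ [] := by
        intro hnil
        rw [hnil] at hy
        have : wpow ([] : List D.Letter) n = [] :=
          List.eq_nil_of_length_eq_zero (by rw [length_wpow]; simp)
        rw [this] at hy; simp at hy
      rwa [head?_wpow w hw n hn] at hy

end StringData

/-- Over a domestic string algebra, two copies of a band `b` cannot properly overlap in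
a string: there is no string `u = p ++ m ++ q` with `b = p ++ m = m ++ q` and `p`, `m`
nonempty proper. -/
theorem band_not_overlap_self (D : StringData) (hdom : D.Domestic)
    (b : List D.Letter) (hb : D.IsBand b) :
    ¬ ∃ p m q : List D.Letter, p ≠ [] ∧ m ≠ [] ∧ b = p ++ m ∧ b = m ++ q ∧
        D.IsString (p ++ m ++ q) := by
  open StringData in
  rintro ⟨p, mm, q, hp, hm, hpm, hmq, -⟩
  obtain ⟨⟨hbne, hbchain⟩, ⟨a, x, c, hshape⟩, ⟨l, l', hl, hl', hadj⟩, hprim⟩ := hb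
  have lp : 0 < p.length := List.length_pos_iff.mpr hp
  have lm : 0 < mm.length := List.length_pos_iff.mpr hm
  -- head and last of b
  have hbhead : b.head? = some (Sum.inl a) := by rw [hshape]; rfl
  have hblast : b.getLast? = some (Sum.inr c) := by
    rw [hshape, show (Sum.inl a : D.Letter) :: (x ++ [Sum.inr c]) =
      ((Sum.inl a :: x) ++ [Sum.inr c]) from rfl, List.getLast?_concat]
  -- the cyclic closure of b
  have hadj' : D.Adj (Sum.inr c) (Sum.inl a) := by
    rw [hl] at hblast; rw [hl'] at hbhead
    rw [← Option.some_injective _ hblast, ← Option.some_injective _ hbhead]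
    exact hadj
  -- facts about p and mm
  have hphead : p.head? = some (Sum.inl a) := by
    rw [hpm, List.head?_append_of_ne_nil _ hp] at hbhead; exact hbhead
  have hmhead : mm.head? = some (Sum.inl a) := by
    have := hbhead
    rw [hmq, List.head?_append_of_ne_nil _ hm] at this; exact this
  have hmlast : mm.getLast? = some (Sum.inr c) := by
    rw [hpm, List.getLast?_append_of_ne_nil _ hm] at hblast; exact hblast
  have hbchain' : (p ++ mm).Chain' D.Adj := by rw [← hpm]; exact hbchain
  change List.IsChain _ _ at hbchain'; rw [List.isChain_append] at hbchain'
  obtain ⟨cp, cm, bd⟩ := hbchain'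
  -- p closes up on itself
  have hpcl : ∀ x' ∈ p.getLast?, ∀ y ∈ p.head?, D.Adj x' y := by
    intro x' hx' y hy
    rw [hphead] at hy
    have := bd x' hx' (Sum.inl a) (by rw [hmhead]; rfl)
    simp only [Option.mem_def, Option.some.injEq] at hy
    rwa [← hy]
  -- the family of cyclically closing strings
  set cw : ℕ → List D.Letter := fun n => wpow p (n + 1) ++ mm with hcw
  have hwpne : ∀ n : ℕ, wpow p (n + 1) ≠ [] := fun n => wpow_ne_nil hp (by omega)
  have hcne : ∀ n, cw n ≠ [] := by
    intro n h
    rcases List.append_eq_nil_iff.mp h with ⟨-, h2⟩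
    exact hm h2
  have hchead : ∀ n, (cw n).head? = some (Sum.inl a) := by
    intro n
    rw [hcw]
    simp only
    rw [List.head?_append_of_ne_nil _ (hwpne n), head?_wpow p hp (n + 1) (by omega),
      hphead]
  have hclast : ∀ n, (cw n).getLast? = some (Sum.inr c) := by
    intro n
    rw [hcw]
    simp only
    rw [List.getLast?_append_of_ne_nil _ hm, hmlast]
  have hcchain : ∀ n, (cw n).Chain' D.Adj := by
    intro n
    rw [hcw]
    simp only
    change List.IsChain _ _; rw [List.isChain_append]
    refine ⟨chain'_wpow cp hpcl (n + 1), cm, ?_⟩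
    intro x' hx' y hy
    rw [getLast?_wpow p hp (n + 1) (by omega)] at hx'
    exact bd x' hx' y hy
  have hclen : ∀ n, (cw n).length = (n + 1) * p.length + mm.length := by
    intro n
    rw [hcw]
    simp only
    rw [List.length_append, length_wpow]
  -- primitive roots of the cw n, as bands
  have hroots : ∀ n : ℕ, ∃ r j, cw n = wpow r j ∧ 1 ≤ j ∧ Primitive r :=
    fun n => exists_primitive_root (cw n) (hcne n)
  choose r j hcr hj hrprim using hroots
  have hrne : ∀ n, r n ≠ [] := by
    intro n hnil
    apply hcne n
    rw [hcr n, hnil]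
    apply List.eq_nil_of_length_eq_zero
    rw [length_wpow]
    simp
  have hrband : ∀ n, D.IsBand (r n) := by
    intro n
    have hj1 := hj n
    have hrpre : cw n = r n ++ wpow (r n) (j n - 1) := by
      rw [hcr n]
      conv_lhs => rw [show j n = 1 + (j n - 1) by omega]
      rw [wpow_add, wpow_one]
    have hrsuf : cw n = wpow (r n) (j n - 1) ++ r n := by
      rw [hcr n]
      conv_lhs => rw [show j n = (j n - 1) + 1 by omega]
      rw [wpow_add, wpow_one]
    have hrhead : (r n).head? = some (Sum.inl a) := by
      have := hchead n
      rw [hrpre, List.head?_append_of_ne_nil _ (hrne n)] at this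
      exact this
    have hrlast : (r n).getLast? = some (Sum.inr c) := by
      have := hclast n
      rw [hrsuf, List.getLast?_append_of_ne_nil _ (hrne n)] at this
      exact this
    have hrlen2 : 2 ≤ (r n).length := by
      rcases Nat.lt_or_ge (r n).length 2 with h2 | h2
      · exfalso
        have h1 : 0 < (r n).length := List.length_pos_iff.mpr (hrne n)
        have : (r n).length = 1 := by omega
        obtain ⟨z, hz⟩ := List.length_eq_one_iff.mp this
        rw [hz] at hrhead hrlast
        simp at hrhead hrlast
        rw [hrhead] at hrlast
        exact Sum.inl_ne_inr hrlast
      · exact h2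
    obtain ⟨xr, hxr⟩ := shape_of_head_last hrlen2 hrhead hrlast
    have hrchain : (r n).Chain' D.Adj :=
      List.IsChain.prefix (hcchain n) ⟨wpow (r n) (j n - 1), hrpre.symm⟩
    exact ⟨⟨hrne n, hrchain⟩, ⟨a, xr, c, hxr⟩,
      ⟨Sum.inr c, Sum.inl a, hrlast, hrhead, hadj'⟩, hrprim n⟩
  -- pigeonhole
  haveI : Finite {w : List D.Letter | D.IsBand w} := hdom.to_subtype
  obtain ⟨n, m', hne, heq⟩ := Finite.exists_ne_map_eq_of_infinite
    (fun n : ℕ => (⟨r n, hrband n⟩ : {w : List D.Letter | D.IsBand w}))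
  have hreq : r n = r m' := congrArg Subtype.val heq
  -- the key contradiction, given two indices with the same root
  have key : ∀ n m' : ℕ, n < m' → r n = r m' → False := by
    clear hne heq hreq n m'
    intro n m' hnm hreq
    set R := r n with hR
    have hRm : r m' = R := hreq.symm
    have lR : 0 < R.length := List.length_pos_iff.mpr (hrne n)
    -- exponent comparison
    have hln : (cw n).length = j n * R.length := by rw [hcr n, length_wpow]
    have hlm : (cw m').length = j m' * R.length := by
      rw [hcr m', hRm, length_wpow]
    have hjlt : j n < j m' := by
      have h1 : (cw n).length < (cw m').length := by
        rw [hclen n, hclen m']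
        have : (n + 1) * p.length < (m' + 1) * p.length :=
          (Nat.mul_lt_mul_right lp).mpr (by omega)
        omega
      by_contra hcon
      push_neg at hcon
      have : j m' * R.length ≤ j n * R.length := Nat.mul_le_mul_right _ hcon
      omega
    -- p ^ (m' - n) = R ^ (j m' - j n)
    have hceq : wpow p (m' - n) ++ cw n = cw m' := by
      rw [hcw]
      simp only
      rw [← List.append_assoc, ← wpow_add]
      congr 2
      omega
    have hpow : wpow p (m' - n) = wpow R (j m' - j n) := by
      have h1 : wpow p (m' - n) ++ wpow R (j n) =
          wpow R (j m' - j n) ++ wpow R (j n) := by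
        rw [← wpow_add, show (j m' - j n) + j n = j m' by omega, ← hcr n, hceq,
          hcr m', hRm]
      exact List.append_cancel_right h1
    -- common root
    obtain ⟨s, α, β, hps, hRs⟩ := pow_eq_pow_common p R hp (hrne n)
      (m' - n) (j m' - j n) (by omega) (by omega) hpow
    have hβ : β = 1 := hrprim n s β hRs
    rw [hβ, wpow_one] at hRs
    subst hRs
    -- p = R ^ α with α ≥ 1
    have hα : 1 ≤ α := by
      by_contra hcon
      push_neg at hcon
      interval_cases α
      exact hp (by rw [hps, wpow_zero])
    -- mm = R ^ e with e ≥ 1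
    have hple : p.length = α * R.length := by rw [hps, length_wpow]
    have hexplt : α * (n + 1) < j n := by
      have h1 : (n + 1) * (α * R.length) + mm.length = j n * R.length := by
        rw [← hple, ← hclen n, hln]
      have h2 : (α * (n + 1)) * R.length < j n * R.length := by
        have : (n + 1) * (α * R.length) = (α * (n + 1)) * R.length := by ring
        omega
      by_contra hcon
      push_neg at hcon
      have : j n * R.length ≤ (α * (n + 1)) * R.length := Nat.mul_le_mul_right _ hcon
      omega
    have hmm : mm = wpow R (j n - α * (n + 1)) := by
      have h1 : wpow R (α * (n + 1)) ++ mm =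
          wpow R (α * (n + 1)) ++ wpow R (j n - α * (n + 1)) := by
        rw [← wpow_add, show α * (n + 1) + (j n - α * (n + 1)) = j n by omega,
          ← hcr n, hcw]
        simp only
        rw [hps, wpow_mul, show α * (n + 1) = α * (n + 1) from rfl]
      exact List.append_cancel_left h1
    -- b is a proper power of R : contradiction with primitivity
    set e := j n - α * (n + 1) with he
    have hbpow : b = wpow R (α + e) := by
      rw [hpm, hps, hmm, ← wpow_add]
    have := hprim R (α + e) hbpow
    omega
  rcases Nat.lt_trichotomy n m' with h | h | h
  · exact key n m' h hreq
  · exact hne h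
  · exact key m' n h hreq.symm
end

section
/- Elementary duality D is an anti-isomorphism of the lattice of pp formulas for left R-modules with the lattice of pp formulas for right R-modules, satisfying D(φ ∧ ψ) = Dφ + Dψ, D(φ + ψ) = Dφ ∧ Dψ, and D²φ equivalent to φ. Consequently, for any interval [ψ, φ] in the left pp-lattice, the m-dimension of [ψ, φ] equals the m-dimension of the dual interval [Dφ, Dψ] in the right pp-lattice. -/
/-!
A self-contained framework for pp formulas (in finitely many free variables) over a
ring `R`, pure-injective modules, the Ziegler spectrum, and m-dimension of intervals of
pp formulas.
-/

/-- A pp formula in one free variable over `R`: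
`φ(x) = ∃ (y : Y → M), ∀ j : K, a j • x + ∑ i, H i j • y i = 0`. -/
structure PP (R : Type) [Ring R] where
  /-- index type of the existentially quantified variables -/
  Y : Type
  /-- index type of the linear conditions -/
  K : Type
  [fY : Fintype Y]
  [fK : Fintype K]
  a : K → R
  H : Y → K → R

attribute [instance] PP.fY PP.fK

namespace PP

variable {R : Type} [Ring R]

/-- The solution set of a pp formula in a module. -/
def sol (φ : PP R) (M : Type) [AddCommGroup M] [Module R M] : Set M :=
  {x | ∃ y : φ.Y → M, ∀ j : φ.K, φ.a j • x + ∑ i : φ.Y, φ.H i j • y i = 0}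

/-- Implication of pp formulas: `φ ≤ ψ` iff in every module the solution set of `φ` is
contained in that of `ψ`. -/
def ple (φ ψ : PP R) : Prop :=
  ∀ (M : Type) [AddCommGroup M] [Module R M], φ.sol M ⊆ ψ.sol M

instance : Preorder (PP R) where
  le := ple
  le_refl := fun φ M _ _ => le_refl _
  le_trans := fun φ ψ θ h h' M _ _ => le_trans (h M) (h' M)

/-- Equivalence of pp formulas. -/
def pequiv (φ ψ : PP R) : Prop := φ ≤ ψ ∧ ψ ≤ φ

/-- The conjunction `φ ∧ ψ` of two pp formulas. -/
def meet (φ ψ : PP R) : PP R where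
  Y := φ.Y ⊕ ψ.Y
  K := φ.K ⊕ ψ.K
  a := Sum.elim φ.a ψ.a
  H := fun i j => match i, j with
    | Sum.inl i, Sum.inl j => φ.H i j
    | Sum.inr i, Sum.inr j => ψ.H i j
    | _, _ => 0

/-- The sum `φ + ψ` of two pp formulas (defining the sum of the solution sets). -/
def join (φ ψ : PP R) : PP R where
  Y := Unit ⊕ (φ.Y ⊕ ψ.Y)
  K := φ.K ⊕ ψ.K
  a := Sum.elim (fun _ => 0) ψ.a
  H := fun i j => match i, j with
    | Sum.inl _, Sum.inl j => φ.a j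
    | Sum.inl _, Sum.inr j => -(ψ.a j)
    | Sum.inr (Sum.inl i), Sum.inl j => φ.H i j
    | Sum.inr (Sum.inr i), Sum.inr j => ψ.H i j
    | _, _ => 0

attribute [reducible] meet join

end PP

/-- A pp formula in `t` free variables over `R`. -/
structure PPt (R : Type) [Ring R] (t : ℕ) where
  Y : Type
  K : Type
  [fY : Fintype Y]
  [fK : Fintype K]
  a : Fin t → K → R
  H : Y → K → R

attribute [instance] PPt.fY PPt.fK

/-- The solution set of a pp formula in `t` free variables in a module. -/
def PPt.sol {R : Type} [Ring R] {t : ℕ} (φ : PPt R t) (M : Type) [AddCommGroup M]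
    [Module R M] : Set (Fin t → M) :=
  {x | ∃ y : φ.Y → M, ∀ j : φ.K,
    (∑ s : Fin t, φ.a s j • x s) + ∑ i : φ.Y, φ.H i j • y i = 0}

/-- A pure embedding: an injective linear map reflecting all pp formulas. -/
def IsPureEmb {R : Type} [Ring R] {A B : Type} [AddCommGroup A] [Module R A]
    [AddCommGroup B] [Module R B] (f : A →ₗ[R] B) : Prop :=
  Function.Injective f ∧
    ∀ (t : ℕ) (φ : PPt R t) (x : Fin t → A),
      (fun s => f (x s)) ∈ φ.sol B → x ∈ φ.sol A

/-- A module is pure-injective if every linear map to it from the domain of a pure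
embedding extends along that pure embedding. -/
def PureInjective (R : Type) [Ring R] (M : Type) [AddCommGroup M] [Module R M] : Prop :=
  ∀ (A B : Type) [AddCommGroup A] [Module R A] [AddCommGroup B] [Module R B]
    (g : A →ₗ[R] B), IsPureEmb g →
      ∀ h : A →ₗ[R] M, ∃ h' : B →ₗ[R] M, h' ∘ₗ g = h

/-- A point of the Ziegler spectrum of `R`: an indecomposable pure-injective module. -/
structure ZgPt (R : Type) [Ring R] where
  M : Type
  [acg : AddCommGroup M]
  [mod : Module R M]
  nontriv : Nontrivial M
  indec : ∀ e : M →ₗ[R] M, e ∘ₗ e = e → e = 0 ∨ e = LinearMap.id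
  pinj : PureInjective R M

attribute [instance] ZgPt.acg ZgPt.mod

/-- The basic open set `(φ/ψ)` of the Ziegler spectrum: the points on which the pp-pair
`φ/ψ` is open. -/
def basicOpen {R : Type} [Ring R] (φ ψ : PP R) : Set (ZgPt R) :=
  {N | ¬ φ.sol N.M ⊆ ψ.sol N.M}

/-- The Ziegler topology, generated by the basic open sets `(φ/ψ)` for pp-pairs
`φ ≥ ψ`. -/
instance zgTopology (R : Type) [Ring R] : TopologicalSpace (ZgPt R) :=
  TopologicalSpace.generateFrom {U | ∃ φ ψ : PP R, ψ ≤ φ ∧ U = basicOpen φ ψ}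

section MDim

variable {P : Type*} [Preorder P]

/-- `[x, y]` has finite length modulo `r`: there is a uniform bound on the lengths of
strictly increasing chains inside `[x, y]` no two consecutive members of which are
identified by `r`. -/
def FinLenBetween (r : P → P → Prop) (x y : P) : Prop :=
  ∃ n : ℕ, ∀ (m : ℕ) (f : Fin (m + 1) → P), StrictMono f →
    (∀ i, x ≤ f i ∧ f i ≤ y) →
    (∀ i : Fin m, ¬ r (f i.castSucc) (f i.succ)) → m ≤ n

/-- The transfinite sequence of congruences defining m-dimension: at a successor stage
collapse comparable pairs whose interval has finite length modulo the previous
congruence; at limit stages take unions. -/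
noncomputable def mdimCong (P : Type*) [Preorder P] (o : Ordinal) : P → P → Prop :=
  Ordinal.limitRecOn (motive := fun _ => P → P → Prop) o
    (fun x y => x = y)
    (fun _ ih => Relation.EqvGen
      (fun x y => ih x y ∨ (x ≤ y ∧ FinLenBetween ih x y) ∨ (y ≤ x ∧ FinLenBetween ih y x)))
    (fun o _ ih x y => ∃ (o' : Ordinal) (h : o' < o), ih o' h x y)

/-- `MDimIs P d` : the m-dimension of the ordered set `P` is `d`. -/
def MDimIs (P : Type*) [Preorder P] (d : Ordinal) : Prop :=
  (∀ x y : P, mdimCong P (d + 1) x y) ∧ (d = 0 ∨ ¬ ∀ x y : P, mdimCong P d x y)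

end MDim

/-- The interval `[ψ, φ]` in the lattice of pp formulas. -/
def PPInterval {R : Type} [Ring R] (ψ φ : PP R) : Type 1 :=
  {θ : PP R // ψ ≤ θ ∧ θ ≤ φ}

instance {R : Type} [Ring R] (ψ φ : PP R) : Preorder (PPInterval ψ φ) where
  le := fun a b => a.1 ≤ b.1
  le_refl := fun a => le_refl (α := PP R) a.1
  le_trans := fun _ _ _ h h' => le_trans (α := PP R) h h'


namespace PP

variable {R S : Type} [Ring R] [Ring S]

/-- The dual pp formula along an additive anti-multiplicative map `f`. -/
@[reducible]
def dualMap (f : R → S) (φ : PP R) : PP S where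
  Y := φ.K
  K := Unit ⊕ φ.Y
  a := Sum.elim (fun _ => 1) (fun _ => 0)
  H := fun j k => Sum.elim (fun _ => -(f (φ.a j))) (fun i => f (φ.H i j)) k

lemma sol_dualMap (f : R → S) (φ : PP R) (M : Type) [AddCommGroup M] [Module S M]
    (x : M) : x ∈ (dualMap f φ).sol M ↔
      ∃ z : φ.K → M, x = ∑ j, f (φ.a j) • z j ∧ ∀ i, ∑ j, f (φ.H i j) • z j = 0 := by
  constructor
  · rintro ⟨z, hz⟩
    refine ⟨z, ?_, ?_⟩
    · have h := hz (Sum.inl ())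
      simp only [dualMap, Sum.elim_inl, one_smul, neg_smul] at h
      rw [Finset.sum_neg_distrib] at h
      rw [← sub_eq_add_neg] at h
      exact sub_eq_zero.mp h
    · intro i
      have h := hz (Sum.inr i)
      simpa [dualMap] using h
  · rintro ⟨z, h1, h2⟩
    refine ⟨z, fun j => ?_⟩
    rcases j with ⟨⟩ | i
    · simp only [dualMap, Sum.elim_inl, one_smul, neg_smul]
      rw [Finset.sum_neg_distrib, ← h1, add_neg_cancel]
    · simpa [dualMap] using h2 i

end PP

namespace PP

variable {R : Type} [Ring R]

lemma sol_meet (φ ψ : PP R) (M : Type) [AddCommGroup M] [Module R M] (x : M) :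
    x ∈ (meet φ ψ).sol M ↔ x ∈ φ.sol M ∧ x ∈ ψ.sol M := by
  constructor
  · rintro ⟨y, hy⟩
    constructor
    · refine ⟨fun i => y (Sum.inl i), fun j => ?_⟩
      have h := hy (Sum.inl j)
      simpa [meet, Fintype.sum_sum_type] using h
    · refine ⟨fun i => y (Sum.inr i), fun j => ?_⟩
      have h := hy (Sum.inr j)
      simpa [meet, Fintype.sum_sum_type] using h
  · rintro ⟨⟨y1, hy1⟩, ⟨y2, hy2⟩⟩
    refine ⟨Sum.elim y1 y2, fun j => ?_⟩
    rcases j with j | j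
    · simpa [meet, Fintype.sum_sum_type] using hy1 j
    · simpa [meet, Fintype.sum_sum_type] using hy2 j

lemma sol_join (φ ψ : PP R) (M : Type) [AddCommGroup M] [Module R M] (x : M) :
    x ∈ (join φ ψ).sol M ↔ ∃ u v : M, x = u + v ∧ u ∈ φ.sol M ∧ v ∈ ψ.sol M := by
  constructor
  · rintro ⟨y, hy⟩
    refine ⟨y (Sum.inl ()), x - y (Sum.inl ()), by abel, ?_, ?_⟩
    · refine ⟨fun i => y (Sum.inr (Sum.inl i)), fun j => ?_⟩
      have h := hy (Sum.inl j)
      simpa [join, Fintype.sum_sum_type] using h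
    · refine ⟨fun i => y (Sum.inr (Sum.inr i)), fun j => ?_⟩
      have h := hy (Sum.inr j)
      simp only [join, Fintype.sum_sum_type, Sum.elim_inr, Finset.univ_unique,
        Finset.sum_singleton, zero_smul, Finset.sum_const_zero, zero_add, neg_smul,
        smul_sub] at h ⊢
      rw [← h]; abel
  · rintro ⟨u, v, rfl, ⟨y1, hy1⟩, ⟨y2, hy2⟩⟩
    refine ⟨Sum.elim (fun _ => u) (Sum.elim y1 y2), fun j => ?_⟩
    rcases j with j | j
    · simpa [join, Fintype.sum_sum_type] using hy1 j
    · have h := hy2 j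
      simp only [join, Fintype.sum_sum_type, Sum.elim_inl, Sum.elim_inr, Finset.univ_unique,
        Finset.sum_singleton, zero_smul, Finset.sum_const_zero, zero_add, neg_smul,
        smul_add]
      rw [← h]; abel

end PP

namespace PP

variable {R : Type} [Ring R]

lemma le_matrix {φ ψ : PP R} (h : φ ≤ ψ) :
    ∃ (G : ψ.K → φ.K → R) (v : ψ.Y → (Unit ⊕ φ.Y) → R),
      (∀ j', ψ.a j' + ∑ i', ψ.H i' j' * v i' (Sum.inl ()) = ∑ j, G j' j * φ.a j) ∧
      (∀ j' i, (∑ i', ψ.H i' j' * v i' (Sum.inr i)) = ∑ j, G j' j * φ.H i j) := by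
  classical
  let r : φ.K → ((Unit ⊕ φ.Y) → R) := fun j => Sum.elim (fun _ => φ.a j) (fun i => φ.H i j)
  let N : Submodule R ((Unit ⊕ φ.Y) → R) := Submodule.span R (Set.range r)
  have mk_sum : ∀ {ι : Type} (s : Finset ι) (f : ι → ((Unit ⊕ φ.Y) → R)),
      (Submodule.Quotient.mk (∑ i ∈ s, f i) : _ ⧸ N) = ∑ i ∈ s, Submodule.Quotient.mk (f i) := by
    intro ι s f
    exact map_sum N.mkQ f s
  have hx : (Submodule.Quotient.mk (Pi.single (Sum.inl ()) 1) : _ ⧸ N)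
      ∈ φ.sol (((Unit ⊕ φ.Y) → R) ⧸ N) := by
    refine ⟨fun i => Submodule.Quotient.mk (Pi.single (Sum.inr i) 1), fun j => ?_⟩
    have heq : φ.a j • (Pi.single (Sum.inl ()) 1 : (Unit ⊕ φ.Y) → R)
        + ∑ i : φ.Y, φ.H i j • (Pi.single (Sum.inr i) 1 : (Unit ⊕ φ.Y) → R) = r j := by
      funext k
      rcases k with ⟨⟩ | i
      · simp [r, Pi.single_apply]
      · simp [r, Pi.single_apply, Finset.sum_apply]
    have hmem : (φ.a j • (Pi.single (Sum.inl ()) 1 : (Unit ⊕ φ.Y) → R)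
        + ∑ i : φ.Y, φ.H i j • (Pi.single (Sum.inr i) 1 : (Unit ⊕ φ.Y) → R)) ∈ N := by
      rw [heq]; exact Submodule.subset_span ⟨j, rfl⟩
    have h0 := (Submodule.Quotient.mk_eq_zero N).mpr hmem
    rw [Submodule.Quotient.mk_add, Submodule.Quotient.mk_smul, mk_sum] at h0
    simpa [Submodule.Quotient.mk_smul] using h0
  obtain ⟨yb, hyb⟩ := h _ hx
  have surj : ∀ i', ∃ w, (Submodule.Quotient.mk w : _ ⧸ N) = yb i' := fun i' =>
    Submodule.Quotient.mk_surjective N (yb i')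
  choose v hv using surj
  have key : ∀ j', ∃ c : φ.K → R,
      ∑ j, c j • r j = ψ.a j' • (Pi.single (Sum.inl ()) 1 : (Unit ⊕ φ.Y) → R)
        + ∑ i', ψ.H i' j' • v i' := by
    intro j'
    have hmk : (Submodule.Quotient.mk (ψ.a j' • (Pi.single (Sum.inl ()) 1 : (Unit ⊕ φ.Y) → R)
        + ∑ i', ψ.H i' j' • v i') : _ ⧸ N) = 0 := by
      rw [Submodule.Quotient.mk_add, Submodule.Quotient.mk_smul, mk_sum]
      simp only [Submodule.Quotient.mk_smul, hv]
      exact hyb j'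
    exact (Submodule.mem_span_range_iff_exists_fun R).mp ((Submodule.Quotient.mk_eq_zero N).mp hmk)
  choose G hG using key
  refine ⟨G, v, fun j' => ?_, fun j' i => ?_⟩
  · have h1 := congrFun (hG j') (Sum.inl ())
    simp only [Finset.sum_apply, Pi.smul_apply, Pi.add_apply, smul_eq_mul,
      Pi.single_apply, r, Sum.elim_inl, if_pos rfl, mul_one, if_true] at h1
    exact h1.symm
  · have h1 := congrFun (hG j') (Sum.inr i)
    simp only [Finset.sum_apply, Pi.smul_apply, Pi.add_apply, smul_eq_mul,
      Pi.single_apply, r, Sum.elim_inr, reduceCtorEq, if_false, mul_zero, zero_add] at h1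
    exact h1.symm

end PP

namespace PP

variable {R S : Type} [Ring R] [Ring S]

lemma dualMap_antitone (f : R →+ S) (hf : ∀ a b : R, f (a * b) = f b * f a)
    {φ ψ : PP R} (h : φ ≤ ψ) : dualMap (⇑f) ψ ≤ dualMap (⇑f) φ := by
  obtain ⟨G, v, e1, e2⟩ := le_matrix h
  intro M _ _ x hx
  have hx' : x ∈ (dualMap (⇑f) ψ).sol M := hx
  rw [sol_dualMap] at hx'
  show x ∈ (dualMap (⇑f) φ).sol M
  rw [sol_dualMap]
  obtain ⟨z, hz1, hz2⟩ := hx'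
  refine ⟨fun j => ∑ j', f (G j' j) • z j', ?_, ?_⟩
  · have key : ∑ j, f (φ.a j) • ∑ j', f (G j' j) • z j'
        = ∑ j', f (ψ.a j') • z j' := by
      calc ∑ j, f (φ.a j) • ∑ j', f (G j' j) • z j'
          = ∑ j', f (∑ j, G j' j * φ.a j) • z j' := by
            simp only [Finset.smul_sum, smul_smul, ← hf, map_sum, Finset.sum_smul]
            rw [Finset.sum_comm]
        _ = ∑ j', f (ψ.a j' + ∑ i', ψ.H i' j' * v i' (Sum.inl ())) • z j' := by
            simp only [e1]
        _ = ∑ j', f (ψ.a j') • z j'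
            + ∑ i', f (v i' (Sum.inl ())) • ∑ j', f (ψ.H i' j') • z j' := by
            simp only [map_add, map_sum, hf, add_smul, Finset.sum_smul, smul_smul,
              Finset.sum_add_distrib, Finset.smul_sum]
            rw [Finset.sum_comm]
        _ = ∑ j', f (ψ.a j') • z j' := by
            simp only [hz2, smul_zero, Finset.sum_const_zero, add_zero]
    rw [key, ← hz1]
  · intro i
    calc ∑ j, f (φ.H i j) • ∑ j', f (G j' j) • z j'
        = ∑ j', f (∑ j, G j' j * φ.H i j) • z j' := by
          simp only [Finset.smul_sum, smul_smul, ← hf, map_sum, Finset.sum_smul]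
          rw [Finset.sum_comm]
      _ = ∑ j', f (∑ i', ψ.H i' j' * v i' (Sum.inr i)) • z j' := by
          simp only [e2]
      _ = ∑ i', f (v i' (Sum.inr i)) • ∑ j', f (ψ.H i' j') • z j' := by
          simp only [map_sum, hf, Finset.sum_smul, smul_smul, Finset.smul_sum]
          rw [Finset.sum_comm]
      _ = 0 := by simp only [hz2, smul_zero, Finset.sum_const_zero]

end PP

namespace PP

variable {R S : Type} [Ring R] [Ring S]

lemma pequiv_dualMap_dualMap (f : R → S) (g : S → R) (hg0 : g 0 = 0) (hg1 : g 1 = 1)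
    (hgf : ∀ r, g (f r) = r) (hgnf : ∀ r, g (-(f r)) = -r) (φ : PP R) :
    pequiv (dualMap g (dualMap f φ)) φ := by
  constructor
  · intro M _ _ x hx
    have hx' : x ∈ (dualMap g (dualMap f φ)).sol M := hx
    rw [sol_dualMap] at hx'
    obtain ⟨z, hz1, hz2⟩ := hx'
    have hx0 : x = z (Sum.inl ()) := by
      rw [hz1]
      simp [dualMap, Fintype.sum_sum_type, hg0, hg1]
    refine ⟨fun i => -(z (Sum.inr i)), fun j => ?_⟩
    have h2 := hz2 j
    simp only [dualMap, Fintype.sum_sum_type, Sum.elim_inl, Sum.elim_inr, hgnf, hgf,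
      Finset.univ_unique, Finset.sum_singleton, neg_smul, smul_neg] at h2 ⊢
    have h3 : ∑ i : φ.Y, φ.H i j • z (Sum.inr i) = φ.a j • z (Sum.inl ()) := by
      rwa [add_comm, ← sub_eq_add_neg, sub_eq_zero] at h2
    rw [hx0, Finset.sum_neg_distrib, h3]
    exact add_neg_cancel _
  · intro M _ _ x hx
    obtain ⟨y, hy⟩ := hx
    show x ∈ (dualMap g (dualMap f φ)).sol M
    rw [sol_dualMap]
    refine ⟨Sum.elim (fun _ => x) (fun i => -(y i)), ?_, ?_⟩
    · simp [dualMap, Fintype.sum_sum_type, hg0, hg1]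
    · intro j
      have h := hy j
      simp only [dualMap, Fintype.sum_sum_type, Sum.elim_inl, Sum.elim_inr, hgnf, hgf,
        Finset.univ_unique, Finset.sum_singleton, neg_smul, smul_neg]
      rw [Finset.sum_neg_distrib, ← neg_add, neg_eq_zero]
      exact h

lemma pequiv_dualMap_meet (f : R → S) (hf0 : f 0 = 0) (φ ψ : PP R) :
    pequiv (dualMap f (meet φ ψ)) (join (dualMap f φ) (dualMap f ψ)) := by
  constructor
  · intro M _ _ x hx
    have hx' : x ∈ (dualMap f (meet φ ψ)).sol M := hx
    rw [sol_dualMap] at hx'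
    obtain ⟨z, hz1, hz2⟩ := hx'
    show x ∈ (join (dualMap f φ) (dualMap f ψ)).sol M
    rw [sol_join]
    refine ⟨∑ j, f (φ.a j) • z (Sum.inl j), ∑ j, f (ψ.a j) • z (Sum.inr j), ?_, ?_, ?_⟩
    · rw [hz1]; simp [meet, Fintype.sum_sum_type]
    · rw [sol_dualMap]
      refine ⟨fun j => z (Sum.inl j), rfl, fun i => ?_⟩
      have h := hz2 (Sum.inl i)
      simpa [meet, Fintype.sum_sum_type, hf0] using h
    · rw [sol_dualMap]
      refine ⟨fun j => z (Sum.inr j), rfl, fun i => ?_⟩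
      have h := hz2 (Sum.inr i)
      simpa [meet, Fintype.sum_sum_type, hf0] using h
  · intro M _ _ x hx
    have hx' : x ∈ (join (dualMap f φ) (dualMap f ψ)).sol M := hx
    rw [sol_join] at hx'
    obtain ⟨u, v, rfl, hu, hv⟩ := hx'
    rw [sol_dualMap] at hu hv
    obtain ⟨z1, hz1, hz1'⟩ := hu
    obtain ⟨z2, hz2, hz2'⟩ := hv
    show u + v ∈ (dualMap f (meet φ ψ)).sol M
    rw [sol_dualMap]
    refine ⟨Sum.elim z1 z2, ?_, ?_⟩
    · simp [meet, Fintype.sum_sum_type, ← hz1, ← hz2]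
    · rintro (i | i)
      · simpa [meet, Fintype.sum_sum_type, hf0] using hz1' i
      · simpa [meet, Fintype.sum_sum_type, hf0] using hz2' i

lemma pequiv_dualMap_join (f : R → S) (hf0 : f 0 = 0) (hfn : ∀ r : R, f (-r) = -(f r))
    (φ ψ : PP R) :
    pequiv (dualMap f (join φ ψ)) (meet (dualMap f φ) (dualMap f ψ)) := by
  constructor
  · intro M _ _ x hx
    have hx' : x ∈ (dualMap f (join φ ψ)).sol M := hx
    rw [sol_dualMap] at hx'
    obtain ⟨z, hz1, hz2⟩ := hx'
    have hx1 : x = ∑ j, f (ψ.a j) • z (Sum.inr j) := by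
      rw [hz1]; simp [join, Fintype.sum_sum_type, hf0]
    have hbal : ∑ j, f (φ.a j) • z (Sum.inl j) = ∑ j, f (ψ.a j) • z (Sum.inr j) := by
      have h := hz2 (Sum.inl ())
      simp only [join, Fintype.sum_sum_type, Sum.elim_inl, Sum.elim_inr, hfn, neg_smul,
        Finset.sum_neg_distrib] at h
      rw [← sub_eq_add_neg, sub_eq_zero] at h
      exact h
    show x ∈ (meet (dualMap f φ) (dualMap f ψ)).sol M
    rw [sol_meet]
    constructor
    · rw [sol_dualMap]
      refine ⟨fun j => z (Sum.inl j), by rw [hx1, ← hbal], fun i => ?_⟩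
      have h := hz2 (Sum.inr (Sum.inl i))
      simpa [join, Fintype.sum_sum_type, hf0] using h
    · rw [sol_dualMap]
      refine ⟨fun j => z (Sum.inr j), hx1, fun i => ?_⟩
      have h := hz2 (Sum.inr (Sum.inr i))
      simpa [join, Fintype.sum_sum_type, hf0] using h
  · intro M _ _ x hx
    have hx' : x ∈ (meet (dualMap f φ) (dualMap f ψ)).sol M := hx
    rw [sol_meet] at hx'
    obtain ⟨h1, h2⟩ := hx'
    rw [sol_dualMap] at h1 h2
    obtain ⟨z1, hz1, hz1'⟩ := h1
    obtain ⟨z2, hz2, hz2'⟩ := h2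
    show x ∈ (dualMap f (join φ ψ)).sol M
    rw [sol_dualMap]
    refine ⟨Sum.elim z1 z2, ?_, ?_⟩
    · simpa [join, Fintype.sum_sum_type, hf0] using hz2
    · rintro ((⟨⟩ : Unit) | (i | i))
      · simp only [join, Fintype.sum_sum_type, Sum.elim_inl, Sum.elim_inr, hfn, neg_smul,
          Finset.sum_neg_distrib]
        rw [← hz1, ← hz2, ← sub_eq_add_neg, sub_eq_zero]
      · simpa [join, Fintype.sum_sum_type, hf0] using hz1' i
      · simpa [join, Fintype.sum_sum_type, hf0] using hz2' i

end PP

section MDimTransport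

lemma mdimCong_zero (P : Type*) [Preorder P] :
    mdimCong P 0 = fun x y => x = y :=
  Ordinal.limitRecOn_zero _ _ _

lemma mdimCong_succ (P : Type*) [Preorder P] (o : Ordinal) :
    mdimCong P (Order.succ o) = Relation.EqvGen
      (fun x y => mdimCong P o x y ∨ (x ≤ y ∧ FinLenBetween (mdimCong P o) x y)
        ∨ (y ≤ x ∧ FinLenBetween (mdimCong P o) y x)) :=
  Ordinal.limitRecOn_succ _ _ _ _

lemma mdimCong_limit (P : Type*) [Preorder P] {o : Ordinal} (h : Order.IsSuccLimit o) :
    mdimCong P o = fun x y => ∃ (o' : Ordinal) (_ : o' < o), mdimCong P o' x y :=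
  Ordinal.limitRecOn_limit _ _ _ _ h

lemma finLen_of_equiv {P : Type*} [Preorder P] (r : P → P → Prop) {x y : P}
    (h1 : x ≤ y) (h2 : y ≤ x) : FinLenBetween r x y := by
  refine ⟨0, fun m f hf hb _ => ?_⟩
  by_contra hm
  have hlt : (⟨0, by omega⟩ : Fin (m + 1)) < ⟨1, by omega⟩ := by
    simp [Fin.lt_def]
  have hltf := hf hlt
  have hle : f ⟨1, by omega⟩ ≤ f ⟨0, by omega⟩ :=
    le_trans (hb _).2 (le_trans h2 (hb _).1)
  exact absurd hle (not_le_of_gt hltf)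

lemma mdimCong_symm {P : Type*} [Preorder P] (o : Ordinal) :
    ∀ x y : P, mdimCong P o x y → mdimCong P o y x := by
  induction o using Ordinal.limitRecOn with
  | zero =>
    intro x y h
    simp only [mdimCong_zero] at h ⊢
    exact h.symm
  | add_one o ih =>
    rw [Ordinal.add_one_eq_succ]
    intro x y h
    simp only [mdimCong_succ] at h ⊢
    exact Relation.EqvGen.symm _ _ h
  | limit o hlim ih =>
    intro x y h
    simp only [mdimCong_limit _ hlim] at h ⊢
    obtain ⟨o', ho', h'⟩ := h
    exact ⟨o', ho', ih o' ho' x y h'⟩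

lemma mdimCong_congr {P : Type*} [Preorder P] {o : Ordinal} (ho : o ≠ 0)
    {x x' y y' : P} (hx1 : x ≤ x') (hx2 : x' ≤ x) (hy1 : y ≤ y') (hy2 : y' ≤ y)
    (h : mdimCong P o x y) : mdimCong P o x' y' := by
  rcases Ordinal.zero_or_succ_or_isSuccLimit o with rfl | ⟨a, rfl⟩ | hlim
  · exact absurd rfl ho
  · simp only [mdimCong_succ] at h ⊢
    exact Relation.EqvGen.trans _ x _
      (Relation.EqvGen.rel _ _ (Or.inr (Or.inl ⟨hx2, finLen_of_equiv _ hx2 hx1⟩)))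
      (Relation.EqvGen.trans _ y _ h
        (Relation.EqvGen.rel _ _ (Or.inr (Or.inl ⟨hy1, finLen_of_equiv _ hy1 hy2⟩))))
  · simp only [mdimCong_limit _ hlim] at h ⊢
    obtain ⟨o', ho', h'⟩ := h
    refine ⟨Order.succ o', hlim.succ_lt ho', ?_⟩
    simp only [mdimCong_succ]
    exact Relation.EqvGen.trans _ x _
      (Relation.EqvGen.rel _ _ (Or.inr (Or.inl ⟨hx2, finLen_of_equiv _ hx2 hx1⟩)))
      (Relation.EqvGen.trans _ y _ (Relation.EqvGen.rel _ _ (Or.inl h'))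
        (Relation.EqvGen.rel _ _ (Or.inr (Or.inl ⟨hy1, finLen_of_equiv _ hy1 hy2⟩))))

variable {P : Type*} {Q : Type*} [Preorder P] [Preorder Q]

lemma finLen_dual (U : P → Q) (U' : Q → P)
    (hU' : ∀ a b : Q, a ≤ b ↔ U' b ≤ U' a)
    (hQ1 : ∀ b : Q, U (U' b) ≤ b) (hQ2 : ∀ b : Q, b ≤ U (U' b))
    (hP1 : ∀ a : P, U' (U a) ≤ a) (hP2 : ∀ a : P, a ≤ U' (U a))
    (o : Ordinal)
    (ihPQ : ∀ x y : P, mdimCong P o x y → mdimCong Q o (U x) (U y))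
    {x y : P} (hfl : FinLenBetween (mdimCong P o) x y) :
    FinLenBetween (mdimCong Q o) (U y) (U x) := by
  obtain ⟨n, hn⟩ := hfl
  refine ⟨n, fun m g hg hb hcons => ?_⟩
  set f : Fin (m + 1) → P := fun i => U' (g i.rev) with hf
  have hfmono : StrictMono f := by
    intro i j hij
    have hrev : j.rev < i.rev := by
      rw [Fin.rev_lt_rev]; exact hij
    have hglt := hg hrev
    refine lt_of_le_not_ge ?_ ?_
    · exact (hU' _ _).mp hglt.le
    · intro hc
      exact absurd ((hU' _ _).mpr hc) (not_le_of_gt hglt)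
  have hfb : ∀ i, x ≤ f i ∧ f i ≤ y := by
    intro i
    constructor
    · exact le_trans (hP2 x) ((hU' _ _).mp (hb i.rev).2)
    · exact le_trans ((hU' _ _).mp (hb i.rev).1) (hP1 y)
  refine hn m f hfmono hfb ?_
  intro i hcon
  -- hcon : mdimCong P o (f i.castSucc) (f i.succ)
  have h1 : mdimCong Q o (U (U' (g (i.rev).succ))) (U (U' (g (i.rev).castSucc))) := by
    have := ihPQ _ _ hcon
    simpa only [hf, Fin.rev_castSucc, Fin.rev_succ] using this
  rcases eq_or_ne o 0 with rfl | ho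
  · simp only [mdimCong_zero] at h1
    have hlt := hg (Fin.castSucc_lt_succ (i := i.rev))
    have hcc : g (i.rev).succ ≤ g (i.rev).castSucc := by
      calc g (i.rev).succ ≤ U (U' (g (i.rev).succ)) := hQ2 _
        _ = U (U' (g (i.rev).castSucc)) := h1
        _ ≤ g (i.rev).castSucc := hQ1 _
    exact absurd hcc (not_le_of_gt hlt)
  · have h2 : mdimCong Q o (g (i.rev).succ) (g (i.rev).castSucc) :=
      mdimCong_congr ho (hQ1 _) (hQ2 _) (hQ1 _) (hQ2 _) h1
    exact hcons i.rev (mdimCong_symm o _ _ h2)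

lemma mdim_step (U : P → Q) (U' : Q → P)
    (hU : ∀ a b : P, a ≤ b ↔ U b ≤ U a)
    (hU' : ∀ a b : Q, a ≤ b ↔ U' b ≤ U' a)
    (hQ1 : ∀ b : Q, U (U' b) ≤ b) (hQ2 : ∀ b : Q, b ≤ U (U' b))
    (hP1 : ∀ a : P, U' (U a) ≤ a) (hP2 : ∀ a : P, a ≤ U' (U a))
    (o : Ordinal)
    (ihPQ : ∀ x y : P, mdimCong P o x y → mdimCong Q o (U x) (U y)) :
    ∀ x y : P, mdimCong P (Order.succ o) x y → mdimCong Q (Order.succ o) (U x) (U y) := by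
  intro x y h
  simp only [mdimCong_succ] at h ⊢
  induction h with
  | rel a b hab =>
    refine Relation.EqvGen.rel _ _ ?_
    rcases hab with h1 | ⟨h1, h2⟩ | ⟨h1, h2⟩
    · exact Or.inl (ihPQ _ _ h1)
    · exact Or.inr (Or.inr ⟨(hU _ _).mp h1, finLen_dual U U' hU' hQ1 hQ2 hP1 hP2 o ihPQ h2⟩)
    · exact Or.inr (Or.inl ⟨(hU _ _).mp h1, finLen_dual U U' hU' hQ1 hQ2 hP1 hP2 o ihPQ h2⟩)
  | refl a => exact Relation.EqvGen.refl _
  | symm a b _ ih => exact Relation.EqvGen.symm _ _ ih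
  | trans a b c _ _ ih1 ih2 => exact Relation.EqvGen.trans _ _ _ ih1 ih2

lemma mdimCong_dual (U : P → Q) (U' : Q → P)
    (hU : ∀ a b : P, a ≤ b ↔ U b ≤ U a)
    (hU' : ∀ a b : Q, a ≤ b ↔ U' b ≤ U' a)
    (hQ1 : ∀ b : Q, U (U' b) ≤ b) (hQ2 : ∀ b : Q, b ≤ U (U' b))
    (hP1 : ∀ a : P, U' (U a) ≤ a) (hP2 : ∀ a : P, a ≤ U' (U a))
    (o : Ordinal) :
    (∀ x y : P, mdimCong P o x y → mdimCong Q o (U x) (U y)) ∧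
    (∀ x y : Q, mdimCong Q o x y → mdimCong P o (U' x) (U' y)) := by
  induction o using Ordinal.limitRecOn with
  | zero =>
    constructor
    · intro x y h
      simp only [mdimCong_zero] at h ⊢
      exact congrArg U h
    · intro x y h
      simp only [mdimCong_zero] at h ⊢
      exact congrArg U' h
  | add_one o ih =>
    rw [Ordinal.add_one_eq_succ]
    exact ⟨mdim_step U U' hU hU' hQ1 hQ2 hP1 hP2 o ih.1,
      mdim_step U' U hU' hU hP1 hP2 hQ1 hQ2 o ih.2⟩
  | limit o hlim ih =>
    constructor
    · intro x y h
      simp only [mdimCong_limit _ hlim] at h ⊢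
      obtain ⟨o', ho', h'⟩ := h
      exact ⟨o', ho', (ih o' ho').1 x y h'⟩
    · intro x y h
      simp only [mdimCong_limit _ hlim] at h ⊢
      obtain ⟨o', ho', h'⟩ := h
      exact ⟨o', ho', (ih o' ho').2 x y h'⟩

lemma mdimCong_all_dual (U : P → Q) (U' : Q → P)
    (hU : ∀ a b : P, a ≤ b ↔ U b ≤ U a)
    (hU' : ∀ a b : Q, a ≤ b ↔ U' b ≤ U' a)
    (hQ1 : ∀ b : Q, U (U' b) ≤ b) (hQ2 : ∀ b : Q, b ≤ U (U' b))
    (hP1 : ∀ a : P, U' (U a) ≤ a) (hP2 : ∀ a : P, a ≤ U' (U a))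
    {o : Ordinal} (ho : o ≠ 0) :
    (∀ x y : P, mdimCong P o x y) ↔ (∀ x y : Q, mdimCong Q o x y) := by
  constructor
  · intro h x y
    have := (mdimCong_dual U U' hU hU' hQ1 hQ2 hP1 hP2 o).1 (U' x) (U' y) (h _ _)
    exact mdimCong_congr ho (hQ1 x) (hQ2 x) (hQ1 y) (hQ2 y) this
  · intro h x y
    have := (mdimCong_dual U U' hU hU' hQ1 hQ2 hP1 hP2 o).2 (U x) (U y) (h _ _)
    exact mdimCong_congr ho (hP1 x) (hP2 x) (hP1 y) (hP2 y) this

lemma mdimIs_dual (U : P → Q) (U' : Q → P)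
    (hU : ∀ a b : P, a ≤ b ↔ U b ≤ U a)
    (hU' : ∀ a b : Q, a ≤ b ↔ U' b ≤ U' a)
    (hQ1 : ∀ b : Q, U (U' b) ≤ b) (hQ2 : ∀ b : Q, b ≤ U (U' b))
    (hP1 : ∀ a : P, U' (U a) ≤ a) (hP2 : ∀ a : P, a ≤ U' (U a))
    (d : Ordinal) : MDimIs P d ↔ MDimIs Q d := by
  have hall := fun {o : Ordinal} (ho : o ≠ 0) =>
    mdimCong_all_dual U U' hU hU' hQ1 hQ2 hP1 hP2 ho
  have hd1 : (d + 1 : Ordinal) ≠ 0 := by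
    rw [Ordinal.add_one_eq_succ]
    exact (Order.succ_ne_bot d)
  constructor
  · rintro ⟨h1, h2⟩
    refine ⟨(hall hd1).mp h1, ?_⟩
    by_cases hd : d = 0
    · exact Or.inl hd
    · rcases h2 with rfl | h2
      · exact absurd rfl hd
      · exact Or.inr fun hc => h2 ((hall hd).mpr hc)
  · rintro ⟨h1, h2⟩
    refine ⟨(hall hd1).mpr h1, ?_⟩
    by_cases hd : d = 0
    · exact Or.inl hd
    · rcases h2 with rfl | h2
      · exact absurd rfl hd
      · exact Or.inr fun hc => h2 ((hall hd).mp hc)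

end MDimTransport

/-- `op` as an additive monoid homomorphism. -/
def PP.opHom (R : Type) [Ring R] : R →+ Rᵐᵒᵖ := MulOpposite.opAddEquiv.toAddMonoidHom

/-- `unop` as an additive monoid homomorphism. -/
def PP.unopHom (R : Type) [Ring R] : Rᵐᵒᵖ →+ R := MulOpposite.opAddEquiv.symm.toAddMonoidHom

open PP in
/-- Elementary duality `D` is an anti-isomorphism of the lattice of pp formulas for left
`R`-modules with the lattice of pp formulas for right `R`-modules (= left `Rᵐᵒᵖ`-modules),
satisfying `D(φ ∧ ψ) = Dφ + Dψ`, `D(φ + ψ) = Dφ ∧ Dψ` and `D² φ ≡ φ`.  Consequently for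
any interval `[ψ, φ]` in the left pp-lattice, the m-dimension of `[ψ, φ]` equals the
m-dimension of the dual interval `[Dφ, Dψ]` in the right pp-lattice. -/
theorem elementary_duality (R : Type) [Ring R] :
    ∃ (D : PP R → PP Rᵐᵒᵖ) (D' : PP Rᵐᵒᵖ → PP R),
      (∀ φ ψ : PP R, φ ≤ ψ ↔ D ψ ≤ D φ) ∧
      (∀ φ ψ : PP Rᵐᵒᵖ, φ ≤ ψ ↔ D' ψ ≤ D' φ) ∧
      (∀ φ ψ : PP R, pequiv (D (meet φ ψ)) (join (D φ) (D ψ))) ∧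
      (∀ φ ψ : PP R, pequiv (D (join φ ψ)) (meet (D φ) (D ψ))) ∧
      (∀ φ : PP R, pequiv (D' (D φ)) φ) ∧
      (∀ ψ : PP Rᵐᵒᵖ, pequiv (D (D' ψ)) ψ) ∧
      (∀ (ψ φ : PP R), ψ ≤ φ → ∀ d : Ordinal,
        MDimIs (PPInterval ψ φ) d ↔ MDimIs (PPInterval (D φ) (D ψ)) d) := by
  have hop : ∀ a b : R, opHom R (a * b) = opHom R b * opHom R a := fun a b =>
    MulOpposite.op_mul a b
  have hunop : ∀ a b : Rᵐᵒᵖ, unopHom R (a * b) = unopHom R b * unopHom R a := fun a b =>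
    MulOpposite.unop_mul a b
  have pe : ∀ φ : PP R, pequiv (dualMap ⇑(unopHom R) (dualMap ⇑(opHom R) φ)) φ :=
    fun φ => pequiv_dualMap_dualMap ⇑(opHom R) ⇑(unopHom R) (map_zero _)
      (by rfl) (fun r => rfl) (fun r => rfl) φ
  have pe' : ∀ ψ : PP Rᵐᵒᵖ, pequiv (dualMap ⇑(opHom R) (dualMap ⇑(unopHom R) ψ)) ψ :=
    fun ψ => pequiv_dualMap_dualMap ⇑(unopHom R) ⇑(opHom R) (map_zero _)
      (by rfl) (fun r => rfl) (fun r => rfl) ψ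
  have hmono : ∀ {φ ψ : PP R}, φ ≤ ψ →
      dualMap ⇑(opHom R) ψ ≤ dualMap ⇑(opHom R) φ := fun h =>
    dualMap_antitone (opHom R) hop h
  have hmono' : ∀ {φ ψ : PP Rᵐᵒᵖ}, φ ≤ ψ →
      dualMap ⇑(unopHom R) ψ ≤ dualMap ⇑(unopHom R) φ := fun h =>
    dualMap_antitone (unopHom R) hunop h
  have hiff : ∀ φ ψ : PP R, φ ≤ ψ ↔
      dualMap ⇑(opHom R) ψ ≤ dualMap ⇑(opHom R) φ := fun φ ψ =>
    ⟨fun h => hmono h, fun h => le_trans (pe φ).2 (le_trans (hmono' h) (pe ψ).1)⟩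
  have hiff' : ∀ φ ψ : PP Rᵐᵒᵖ, φ ≤ ψ ↔
      dualMap ⇑(unopHom R) ψ ≤ dualMap ⇑(unopHom R) φ := fun φ ψ =>
    ⟨fun h => hmono' h, fun h => le_trans (pe' φ).2 (le_trans (hmono h) (pe' ψ).1)⟩
  refine ⟨dualMap ⇑(opHom R), dualMap ⇑(unopHom R), hiff, hiff', ?_, ?_, pe, pe', ?_⟩
  · exact fun φ ψ => pequiv_dualMap_meet _ (map_zero _) φ ψ
  · exact fun φ ψ => pequiv_dualMap_join _ (map_zero _) (map_neg _) φ ψ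
  · intro ψ φ hle d
    refine mdimIs_dual
      (fun θ => (⟨dualMap ⇑(opHom R) θ.1, hmono θ.2.2, hmono θ.2.1⟩ :
        PPInterval (dualMap ⇑(opHom R) φ) (dualMap ⇑(opHom R) ψ)))
      (fun θ => (⟨dualMap ⇑(unopHom R) θ.1,
        le_trans (pe ψ).2 (hmono' θ.2.2), le_trans (hmono' θ.2.1) (pe φ).1⟩ :
        PPInterval ψ φ))
      (fun a b => hiff a.1 b.1) (fun a b => hiff' a.1 b.1)
      (fun b => (pe' b.1).1) (fun b => (pe' b.1).2)
      (fun a => (pe a.1).1) (fun a => (pe a.1).2) d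
end
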